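/- Upward Löwenheim–Skolem for split signatures: Let Σ be split by Λ into {Σ_λ}, let 𝔸 be a Σ-structure, and for each λ let κ_λ ≥ max(|Σ_λ|, ℵ₀, sup{|σ^𝔸| : σ ∈ λ, σ^𝔸 infinite}). Then there is a Σ-structure 𝔹 containing 𝔸 as an elementary substructure with |σ^𝔹| = κ_λ for every infinite-sorted σ ∈ λ and σ^𝔹 = σ^𝔸 for every finite-sorted σ. -/

import Mathlib

set_option autoImplicit false

/-- A many-sorted first-order signature. -/
structure MSSignature : Type 1 where
  Sorts : Type
  Func : Type
  Pred : Type
  funcDom : Func → List Sorts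
  funcCod : Func → Sorts
  predDom : Pred → List Sorts

namespace MS

variable (Sg : MSSignature)

/-- Many-sorted terms; variables of each sort are indexed by naturals. -/
inductive Term : Sg.Sorts → Type where
  | var (s : Sg.Sorts) (n : ℕ) : Term s
  | app (f : Sg.Func)
      (args : ∀ i : Fin (Sg.funcDom f).length, Term ((Sg.funcDom f).get i)) :
      Term (Sg.funcCod f)

/-- Many-sorted first-order formulas. -/
inductive Formula : Type where
  | eq {s : Sg.Sorts} (t u : Term Sg s) : Formula
  | pred (P : Sg.Pred)
      (args : ∀ i : Fin (Sg.predDom P).length, Term Sg ((Sg.predDom P).get i)) : Formula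
  | falsum : Formula
  | imp (φ ψ : Formula) : Formula
  | all (s : Sg.Sorts) (n : ℕ) (φ : Formula) : Formula

/-- A structure for a many-sorted signature: each sort gets a nonempty domain. -/
structure Structure : Type 1 where
  dom : Sg.Sorts → Type
  dom_nonempty : ∀ s, Nonempty (dom s)
  interpFunc : ∀ f : Sg.Func,
    (∀ i : Fin (Sg.funcDom f).length, dom ((Sg.funcDom f).get i)) → dom (Sg.funcCod f)
  interpPred : ∀ P : Sg.Pred,
    (∀ i : Fin (Sg.predDom P).length, dom ((Sg.predDom P).get i)) → Prop

variable {Sg}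

/-- Variable assignments. -/
def Assign (A : Structure Sg) : Type := ∀ s : Sg.Sorts, ℕ → A.dom s

open Classical in
noncomputable
def Assign.update {A : Structure Sg} (ν : Assign A) (s : Sg.Sorts) (n : ℕ) (a : A.dom s) :
    Assign A := fun t m =>
  if h : s = t then (if m = n then h ▸ a else ν t m) else ν t m

def Term.eval {A : Structure Sg} (ν : Assign A) : ∀ {s : Sg.Sorts}, Term Sg s → A.dom s
  | _, .var s n => ν s n
  | _, .app f args => A.interpFunc f fun i => Term.eval ν (args i)

/-- Tarskian satisfaction. -/
def Sat (A : Structure Sg) (ν : Assign A) : Formula Sg → Prop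
  | .eq t u => t.eval ν = u.eval ν
  | .pred P args => A.interpPred P fun i => (args i).eval ν
  | .falsum => False
  | .imp φ ψ => Sat A ν φ → Sat A ν ψ
  | .all s n φ => ∀ a : A.dom s, Sat A (ν.update s n a) φ

/-- Derived connectives. -/
def Formula.not (φ : Formula Sg) : Formula Sg := .imp φ .falsum
def Formula.and (φ ψ : Formula Sg) : Formula Sg := (Formula.imp φ ψ.not).not
def Formula.or (φ ψ : Formula Sg) : Formula Sg := .imp φ.not ψ
def Formula.ex (s : Sg.Sorts) (n : ℕ) (φ : Formula Sg) : Formula Sg :=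
  ((Formula.all s n φ.not)).not
def Formula.andList : List (Formula Sg) → Formula Sg :=
  List.foldr Formula.and (Formula.not .falsum)
def Formula.orList : List (Formula Sg) → Formula Sg :=
  List.foldr Formula.or .falsum

/-- Occurrence of variable `(s, n)` in a term. -/
def Term.varOccurs (s : Sg.Sorts) (n : ℕ) : ∀ {t : Sg.Sorts}, Term Sg t → Prop
  | _, .var s' n' => s = s' ∧ n = n'
  | _, .app _ args => ∃ i, Term.varOccurs s n (args i)

/-- Free occurrence of variable `(s, n)` in a formula. -/
def Formula.varFree (s : Sg.Sorts) (n : ℕ) : Formula Sg → Prop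
  | .eq t u => t.varOccurs s n ∨ u.varOccurs s n
  | .pred _ args => ∃ i, (args i).varOccurs s n
  | .falsum => False
  | .imp φ ψ => φ.varFree s n ∨ ψ.varFree s n
  | .all s' n' φ => φ.varFree s n ∧ ¬(s = s' ∧ n = n')

def Formula.IsSentence (φ : Formula Sg) : Prop := ∀ s n, ¬ φ.varFree s n

/-- Quantifier-free formulas. -/
def Formula.IsQF : Formula Sg → Prop
  | .eq _ _ => True
  | .pred _ _ => True
  | .falsum => True
  | .imp φ ψ => φ.IsQF ∧ ψ.IsQF
  | .all _ _ _ => False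

/-- A structure is a model of a set of formulas (a theory) if it satisfies
every axiom under every assignment. -/
def Models (A : Structure Sg) (T : Set (Formula Sg)) : Prop :=
  ∀ φ ∈ T, ∀ ν : Assign A, Sat A ν φ

/-- Elementary equivalence: same sentences hold. -/
def ElemEquiv (A B : Structure Sg) : Prop :=
  ∀ φ : Formula Sg, φ.IsSentence →
    ((∀ ν : Assign A, Sat A ν φ) ↔ (∀ ν : Assign B, Sat B ν φ))

/-- Substructures: sort-wise subsets closed under the functions. -/
structure Substructure (A : Structure Sg) : Type 1 where
  carrier : ∀ s : Sg.Sorts, Set (A.dom s)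
  carrier_nonempty : ∀ s, (carrier s).Nonempty
  closed : ∀ (f : Sg.Func)
    (args : ∀ i : Fin (Sg.funcDom f).length, A.dom ((Sg.funcDom f).get i)),
    (∀ i, args i ∈ carrier _) → A.interpFunc f args ∈ carrier _

/-- The induced structure on a substructure. -/
def Substructure.toStructure {A : Structure Sg} (B : Substructure A) : Structure Sg where
  dom s := ↥(B.carrier s)
  dom_nonempty s := ⟨⟨(B.carrier_nonempty s).choose, (B.carrier_nonempty s).choose_spec⟩⟩
  interpFunc f args :=
    ⟨A.interpFunc f fun i => (args i).1, B.closed f _ fun i => (args i).2⟩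
  interpPred P args := A.interpPred P fun i => (args i).1

/-- View an assignment into a substructure as an assignment into the ambient structure. -/
def Substructure.amb {A : Structure Sg} (B : Substructure A)
    (ν : Assign B.toStructure) : Assign A := fun s n => (ν s n).1

/-- `B` is an elementary substructure of `A`. -/
def Substructure.IsElementary {A : Structure Sg} (B : Substructure A) : Prop :=
  ∀ (φ : Formula Sg) (ν : Assign B.toStructure),
    Sat B.toStructure ν φ ↔ Sat A (B.amb ν) φ

/-- Isomorphisms of structures. -/
structure Iso (A B : Structure Sg) : Type 1 where
  toEquiv : ∀ s, A.dom s ≃ B.dom s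
  map_func : ∀ (f : Sg.Func) args,
    toEquiv _ (A.interpFunc f args) = B.interpFunc f (fun i => toEquiv _ (args i))
  map_pred : ∀ (P : Sg.Pred) args,
    A.interpPred P args ↔ B.interpPred P (fun i => toEquiv _ (args i))

end MS

/-- The cardinality of a signature: sorts + function symbols + predicate symbols. -/
noncomputable def MSSignature.card (Sg : MSSignature) : Cardinal :=
  Cardinal.mk Sg.Sorts + Cardinal.mk Sg.Func + Cardinal.mk Sg.Pred

/-- A countable signature. -/
def MSSignature.IsCountable (Sg : MSSignature) : Prop :=
  Countable Sg.Sorts ∧ Countable Sg.Func ∧ Countable Sg.Pred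

namespace MS

variable {Sg : MSSignature}

/-- A splitting of a signature by a partition `Λ` of its sorts: every function and
predicate symbol uses sorts from a single part only. -/
structure Split (Sg : MSSignature) (Λ : Type) where
  sortPart : Sg.Sorts → Λ
  funcPart : Sg.Func → Λ
  predPart : Sg.Pred → Λ
  func_dom : ∀ (f : Sg.Func) (i : Fin (Sg.funcDom f).length),
    sortPart ((Sg.funcDom f).get i) = funcPart f
  func_cod : ∀ f : Sg.Func, sortPart (Sg.funcCod f) = funcPart f
  pred_dom : ∀ (P : Sg.Pred) (i : Fin (Sg.predDom P).length),
    sortPart ((Sg.predDom P).get i) = predPart P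

/-- A term lies in the sub-signature `Σ_l`. -/
def Term.inPart {Λ : Type} (sp : Split Sg Λ) (l : Λ) :
    ∀ {s : Sg.Sorts}, Term Sg s → Prop
  | s, .var _ _ => sp.sortPart s = l
  | _, .app f args => sp.funcPart f = l ∧ ∀ i, Term.inPart sp l (args i)

/-- A formula lies in the sub-signature `Σ_l`: all its symbols and the sorts of all
its variables belong to the part `l`. -/
def Formula.inPart {Λ : Type} (sp : Split Sg Λ) (l : Λ) : Formula Sg → Prop
  | .eq (s := s) t u => sp.sortPart s = l ∧ t.inPart sp l ∧ u.inPart sp l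
  | .pred P args => sp.predPart P = l ∧ ∀ i, (args i).inPart sp l
  | .falsum => True
  | .imp φ ψ => φ.inPart sp l ∧ ψ.inPart sp l
  | .all s _ φ => sp.sortPart s = l ∧ φ.inPart sp l

/-- A generalized `Λ`-cube: a conjunction of formulas, each over a single
sub-signature, with pairwise distinct parts. -/
def Formula.IsGenCube {Λ : Type} (sp : Split Sg Λ) (φ : Formula Sg) : Prop :=
  ∃ L : List (Λ × Formula Sg), (L.map Prod.fst).Nodup ∧
    (∀ p ∈ L, (p.2).inPart sp p.1) ∧ φ = Formula.andList (L.map Prod.snd)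

/-- A generalized `Λ`-clause: a disjunction of formulas, each over a single
sub-signature, with pairwise distinct parts. -/
def Formula.IsGenClause {Λ : Type} (sp : Split Sg Λ) (φ : Formula Sg) : Prop :=
  ∃ L : List (Λ × Formula Sg), (L.map Prod.fst).Nodup ∧
    (∀ p ∈ L, (p.2).inPart sp p.1) ∧ φ = Formula.orList (L.map Prod.snd)

/-- Generalized disjunctive normal form: a disjunction of generalized cubes. -/
def Formula.IsGDNF {Λ : Type} (sp : Split Sg Λ) (φ : Formula Sg) : Prop :=
  ∃ L : List (Formula Sg), (∀ ψ ∈ L, ψ.IsGenCube sp) ∧ φ = Formula.orList L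

/-- Generalized conjunctive normal form: a conjunction of generalized clauses. -/
def Formula.IsGCNF {Λ : Type} (sp : Split Sg Λ) (φ : Formula Sg) : Prop :=
  ∃ L : List (Formula Sg), (∀ ψ ∈ L, ψ.IsGenClause sp) ∧ φ = Formula.andList L

/-- Logical equivalence of many-sorted formulas. -/
def LogEquiv (φ ψ : Formula Sg) : Prop :=
  ∀ (A : Structure Sg) (ν : Assign A), Sat A ν φ ↔ Sat A ν ψ

/-- The cardinality of the sub-signature `Σ_l` determined by a splitting. -/
noncomputable def Split.partCard {Λ : Type} (sp : Split Sg Λ) (l : Λ) : Cardinal :=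
  Cardinal.mk {s : Sg.Sorts // sp.sortPart s = l} +
    Cardinal.mk {f : Sg.Func // sp.funcPart f = l} +
    Cardinal.mk {P : Sg.Pred // sp.predPart P = l}

end MS

open MS Cardinal



set_option autoImplicit false
set_option maxHeartbeats 1000000

open Cardinal

namespace MS

variable {Sg : MSSignature}

theorem sat_eq_iff {A : Structure Sg} {ν : Assign A} {s : Sg.Sorts} {t u : Term Sg s} :
    Sat A ν (.eq t u) ↔ t.eval ν = u.eval ν := Iff.rfl

theorem sat_imp_iff {A : Structure Sg} {ν : Assign A} {φ ψ : Formula Sg} :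
    Sat A ν (.imp φ ψ) ↔ (Sat A ν φ → Sat A ν ψ) := Iff.rfl

theorem sat_falsum_iff {A : Structure Sg} {ν : Assign A} :
    Sat A ν .falsum ↔ False := Iff.rfl

theorem sat_all_iff {A : Structure Sg} {ν : Assign A} {s n} {φ : Formula Sg} :
    Sat A ν (.all s n φ) ↔ ∀ a : A.dom s, Sat A (ν.update s n a) φ := Iff.rfl

theorem sat_not_iff {A : Structure Sg} {ν : Assign A} {φ : Formula Sg} :
    Sat A ν φ.not ↔ ¬ Sat A ν φ := Iff.rfl

theorem sat_and_iff {A : Structure Sg} {ν : Assign A} {φ ψ : Formula Sg} :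
    Sat A ν (φ.and ψ) ↔ Sat A ν φ ∧ Sat A ν ψ := by
  simp only [Formula.and, sat_not_iff, sat_imp_iff]
  tauto

theorem sat_or_iff {A : Structure Sg} {ν : Assign A} {φ ψ : Formula Sg} :
    Sat A ν (φ.or ψ) ↔ Sat A ν φ ∨ Sat A ν ψ := by
  simp only [Formula.or, sat_imp_iff, sat_not_iff]
  tauto

theorem sat_ex_iff {A : Structure Sg} {ν : Assign A} {s n} {φ : Formula Sg} :
    Sat A ν (.ex s n φ) ↔ ∃ a : A.dom s, Sat A (ν.update s n a) φ := by
  simp only [Formula.ex, sat_not_iff, sat_all_iff]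
  exact not_forall_not

theorem sat_andList_iff {A : Structure Sg} {ν : Assign A} {L : List (Formula Sg)} :
    Sat A ν (Formula.andList L) ↔ ∀ φ ∈ L, Sat A ν φ := by
  induction L with
  | nil => exact iff_of_true (fun h => h) (by simp)
  | cons φ L ih =>
    show Sat A ν (φ.and (Formula.andList L)) ↔ _
    rw [sat_and_iff, ih]
    simp

theorem sat_orList_iff {A : Structure Sg} {ν : Assign A} {L : List (Formula Sg)} :
    Sat A ν (Formula.orList L) ↔ ∃ φ ∈ L, Sat A ν φ := by
  induction L with
  | nil => simp [Formula.orList, sat_falsum_iff]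
  | cons φ L ih =>
    show Sat A ν (φ.or (Formula.orList L)) ↔ _
    rw [sat_or_iff, ih]
    simp

/-! ### update lemmas -/

theorem Assign.update_same {A : Structure Sg} (ν : Assign A) (s : Sg.Sorts) (n : ℕ)
    (a : A.dom s) : ν.update s n a s n = a := by
  unfold Assign.update
  rw [dif_pos rfl, if_pos rfl]

theorem Assign.update_ne {A : Structure Sg} (ν : Assign A) {s : Sg.Sorts} {n : ℕ}
    (a : A.dom s) {t : Sg.Sorts} {m : ℕ} (h : ¬(t = s ∧ m = n)) :
    ν.update s n a t m = ν t m := by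
  unfold Assign.update
  by_cases hst : s = t
  · subst hst
    rw [dif_pos rfl, if_neg fun hmn => h ⟨rfl, hmn⟩]
  · rw [dif_neg hst]

theorem update_agree {A : Structure Sg} {ν ν' : Assign A} {s : Sg.Sorts} {n : ℕ}
    (a : A.dom s) {t : Sg.Sorts} {m : ℕ} (h : ¬(t = s ∧ m = n) → ν t m = ν' t m) :
    ν.update s n a t m = ν'.update s n a t m := by
  unfold Assign.update
  by_cases hst : s = t
  · subst hst
    rw [dif_pos rfl, dif_pos rfl]
    by_cases hmn : m = n
    · rw [if_pos hmn, if_pos hmn]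
    · rw [if_neg hmn, if_neg hmn]
      exact h fun hc => hmn hc.2
  · rw [dif_neg hst, dif_neg hst]
    exact h fun hc => hst hc.1.symm

/-! ### variable lists -/

def Term.varList : ∀ {s : Sg.Sorts}, Term Sg s → List (Sg.Sorts × ℕ)
  | _, .var s n => [(s, n)]
  | _, .app _ args => (List.ofFn fun i => (args i).varList).flatten

theorem Term.mem_varList_app {f : Sg.Func}
    {args : ∀ i : Fin (Sg.funcDom f).length, Term Sg ((Sg.funcDom f).get i)}
    {p : Sg.Sorts × ℕ} :
    p ∈ (Term.app (Sg := Sg) f args).varList ↔ ∃ i, p ∈ (args i).varList := by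
  simp only [Term.varList, List.mem_flatten, List.mem_ofFn]
  constructor
  · rintro ⟨L, ⟨i, rfl⟩, hp⟩; exact ⟨i, hp⟩
  · rintro ⟨i, hp⟩; exact ⟨_, ⟨i, rfl⟩, hp⟩

def Formula.varList : Formula Sg → List (Sg.Sorts × ℕ)
  | .eq t u => t.varList ++ u.varList
  | .pred _ args => (List.ofFn fun i => (args i).varList).flatten
  | .falsum => []
  | .imp φ ψ => φ.varList ++ ψ.varList
  | .all s n φ => (s, n) :: φ.varList

theorem Term.eval_congr {A : Structure Sg} :
    ∀ {s : Sg.Sorts} (t : Term Sg s) {ν ν' : Assign A},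
      (∀ p ∈ t.varList, ν p.1 p.2 = ν' p.1 p.2) → t.eval ν = t.eval ν'
  | _, .var s n, ν, ν', h => h (s, n) (by simp [Term.varList])
  | _, .app f args, ν, ν', h => by
      show A.interpFunc f _ = A.interpFunc f _
      congr 1
      funext i
      exact Term.eval_congr (args i) fun p hp => h p (Term.mem_varList_app.2 ⟨i, hp⟩)

theorem sat_congr {A : Structure Sg} :
    ∀ (φ : Formula Sg) {ν ν' : Assign A},
      (∀ p ∈ φ.varList, ν p.1 p.2 = ν' p.1 p.2) → (Sat A ν φ ↔ Sat A ν' φ)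
  | .eq t u, ν, ν', h => by
      rw [sat_eq_iff, sat_eq_iff,
        Term.eval_congr t fun p hp => h p (List.mem_append_left _ hp),
        Term.eval_congr u fun p hp => h p (List.mem_append_right _ hp)]
  | .pred P args, ν, ν', h => by
      show A.interpPred P _ ↔ A.interpPred P _
      have : (fun i => (args i).eval ν) = fun i => (args i).eval ν' := by
        funext i
        refine Term.eval_congr (args i) fun p hp => h p ?_
        show p ∈ Formula.varList (.pred P args)
        simp only [Formula.varList, List.mem_flatten, List.mem_ofFn]
        exact ⟨_, ⟨i, rfl⟩, hp⟩
      rw [this]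
  | .falsum, ν, ν', h => Iff.rfl
  | .imp φ ψ, ν, ν', h => by
      rw [sat_imp_iff, sat_imp_iff,
        sat_congr φ fun p hp => h p (List.mem_append_left _ hp),
        sat_congr ψ fun p hp => h p (List.mem_append_right _ hp)]
  | .all s n φ, ν, ν', h => by
      rw [sat_all_iff, sat_all_iff]
      refine forall_congr' fun a => ?_
      refine sat_congr φ fun p hp => ?_
      exact update_agree a fun _ => h p (List.mem_cons_of_mem _ hp)

end MS


set_option autoImplicit false
set_option maxHeartbeats 1000000

open Cardinal

namespace MS

variable {Sg : MSSignature} {Λ : Type} {sp : Split Sg Λ}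

/-! ### inPart lemmas -/

theorem Formula.inPart_falsum {l : Λ} : (Formula.falsum (Sg := Sg)).inPart sp l := trivial

theorem Formula.inPart_imp {l : Λ} {φ ψ : Formula Sg} (h1 : φ.inPart sp l)
    (h2 : ψ.inPart sp l) : (φ.imp ψ).inPart sp l := ⟨h1, h2⟩

theorem Formula.inPart_not {l : Λ} {φ : Formula Sg} (h : φ.inPart sp l) :
    φ.not.inPart sp l := ⟨h, trivial⟩

theorem Formula.inPart_and {l : Λ} {φ ψ : Formula Sg} (h1 : φ.inPart sp l)
    (h2 : ψ.inPart sp l) : (φ.and ψ).inPart sp l := ⟨⟨h1, ⟨h2, trivial⟩⟩, trivial⟩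

theorem Formula.inPart_or {l : Λ} {φ ψ : Formula Sg} (h1 : φ.inPart sp l)
    (h2 : ψ.inPart sp l) : (φ.or ψ).inPart sp l := ⟨⟨h1, trivial⟩, h2⟩

theorem Formula.inPart_all {l : Λ} {s n} {φ : Formula Sg} (hs : sp.sortPart s = l)
    (h : φ.inPart sp l) : (Formula.all s n φ).inPart sp l := ⟨hs, h⟩

theorem Formula.inPart_ex {l : Λ} {s n} {φ : Formula Sg} (hs : sp.sortPart s = l)
    (h : φ.inPart sp l) : (Formula.ex s n φ).inPart sp l :=
  Formula.inPart_not (Formula.inPart_all hs (Formula.inPart_not h))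

theorem Formula.inPart_andList {l : Λ} {L : List (Formula Sg)}
    (h : ∀ φ ∈ L, φ.inPart sp l) : (Formula.andList L).inPart sp l := by
  induction L with
  | nil => exact Formula.inPart_not Formula.inPart_falsum
  | cons φ L ih =>
    exact Formula.inPart_and (h φ (List.mem_cons_self))
      (ih fun ψ hψ => h ψ (List.mem_cons_of_mem _ hψ))

theorem Formula.inPart_orList {l : Λ} {L : List (Formula Sg)}
    (h : ∀ φ ∈ L, φ.inPart sp l) : (Formula.orList L).inPart sp l := by
  induction L with
  | nil => exact Formula.inPart_falsum
  | cons φ L ih =>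
    exact Formula.inPart_or (h φ (List.mem_cons_self))
      (ih fun ψ hψ => h ψ (List.mem_cons_of_mem _ hψ))

/-- Every term of sort `s` lies in the part of `s`. -/
theorem Term.inPart_sortPart {l : Λ} :
    ∀ {s : Sg.Sorts} (t : Term Sg s), sp.sortPart s = l → t.inPart sp l
  | _, .var _ _, h => h
  | _, .app f args, h => by
      have hf : sp.funcPart f = l := by rw [← sp.func_cod f]; exact h
      exact ⟨hf, fun i => Term.inPart_sortPart (args i) (by rw [sp.func_dom f i, hf])⟩

theorem Term.varList_part {l : Λ} :
    ∀ {s : Sg.Sorts} (t : Term Sg s), t.inPart sp l → ∀ p ∈ t.varList, sp.sortPart p.1 = l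
  | _, .var s n, h, p, hp => by
      simp only [Term.varList, List.mem_singleton] at hp
      subst hp; exact h
  | _, .app f args, h, p, hp => by
      rcases Term.mem_varList_app.1 hp with ⟨i, hpi⟩
      exact Term.varList_part (args i) (h.2 i) p hpi

theorem Formula.varList_part {l : Λ} :
    ∀ (φ : Formula Sg), φ.inPart sp l → ∀ p ∈ φ.varList, sp.sortPart p.1 = l
  | .eq t u, h, p, hp => by
      rcases List.mem_append.1 hp with hp | hp
      · exact Term.varList_part t h.2.1 p hp
      · exact Term.varList_part u h.2.2 p hp
  | .pred P args, h, p, hp => by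
      simp only [Formula.varList, List.mem_flatten, List.mem_ofFn] at hp
      rcases hp with ⟨L, ⟨i, rfl⟩, hp⟩
      exact Term.varList_part (args i) (h.2 i) p hp
  | .falsum, h, p, hp => by simp [Formula.varList] at hp
  | .imp φ ψ, h, p, hp => by
      rcases List.mem_append.1 hp with hp | hp
      · exact Formula.varList_part φ h.1 p hp
      · exact Formula.varList_part ψ h.2 p hp
  | .all s n φ, h, p, hp => by
      rcases List.mem_cons.1 hp with rfl | hp
      · exact h.1
      · exact Formula.varList_part φ h.2 p hp

/-- Satisfaction of a part-`l` formula is unaffected by updates at sorts outside `l`. -/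
theorem sat_update_of_part_ne {A : Structure Sg} {ν : Assign A} {l : Λ} {φ : Formula Sg}
    (hφ : φ.inPart sp l) {s : Sg.Sorts} (hs : sp.sortPart s ≠ l) {n : ℕ} {a : A.dom s} :
    Sat A (ν.update s n a) φ ↔ Sat A ν φ := by
  refine sat_congr φ fun p hp => ?_
  refine Assign.update_ne ν a fun hc => ?_
  exact hs (hc.1 ▸ Formula.varList_part (sp := sp) φ hφ p hp)

/-! ### LogEquiv -/

theorem LogEquiv.refl (φ : Formula Sg) : LogEquiv φ φ := fun _ _ => Iff.rfl

theorem LogEquiv.symm {φ ψ : Formula Sg} (h : LogEquiv φ ψ) : LogEquiv ψ φ :=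
  fun A ν => (h A ν).symm

theorem LogEquiv.trans {φ ψ χ : Formula Sg} (h1 : LogEquiv φ ψ) (h2 : LogEquiv ψ χ) :
    LogEquiv φ χ := fun A ν => (h1 A ν).trans (h2 A ν)

theorem LogEquiv.imp {φ φ' ψ ψ' : Formula Sg} (h1 : LogEquiv φ φ') (h2 : LogEquiv ψ ψ') :
    LogEquiv (φ.imp ψ) (φ'.imp ψ') := fun A ν => by
  rw [sat_imp_iff, sat_imp_iff, h1 A ν, h2 A ν]

theorem LogEquiv.not {φ φ' : Formula Sg} (h : LogEquiv φ φ') :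
    LogEquiv φ.not φ'.not := h.imp (LogEquiv.refl _)

theorem LogEquiv.all {φ φ' : Formula Sg} (s : Sg.Sorts) (n : ℕ) (h : LogEquiv φ φ') :
    LogEquiv (Formula.all s n φ) (Formula.all s n φ') := fun A ν => by
  rw [sat_all_iff, sat_all_iff]
  exact forall_congr' fun a => h A _

/-! ### Substructure lemmas -/

theorem Substructure.eval_amb {A : Structure Sg} (B : Substructure A)
    (ν : Assign B.toStructure) :
    ∀ {s : Sg.Sorts} (t : Term Sg s), (t.eval ν).1 = t.eval (B.amb ν)
  | _, .var s n => rfl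
  | _, .app f args => by
      simp only [Term.eval]
      show (A.interpFunc f fun i => ((args i).eval ν).1) = A.interpFunc f _
      congr 1
      funext i
      exact Substructure.eval_amb B ν (args i)

theorem Substructure.amb_update {A : Structure Sg} (B : Substructure A)
    (ν : Assign B.toStructure) (s : Sg.Sorts) (n : ℕ) (a : B.toStructure.dom s) :
    B.amb (ν.update s n a) = (B.amb ν).update s n a.1 := by
  funext t m
  unfold Substructure.amb Assign.update
  by_cases hst : s = t
  · subst hst
    rw [dif_pos rfl, dif_pos rfl]
    by_cases hmn : m = n
    · rw [if_pos hmn, if_pos hmn]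
    · rw [if_neg hmn, if_neg hmn]
  · rw [dif_neg hst, dif_neg hst]

/-! ### Iso invariance -/

def Iso.assign {A B : Structure Sg} (e : Iso A B) (ν : Assign A) : Assign B :=
  fun s n => e.toEquiv s (ν s n)

theorem Iso.eval_assign {A B : Structure Sg} (e : Iso A B) (ν : Assign A) :
    ∀ {s : Sg.Sorts} (t : Term Sg s), e.toEquiv s (t.eval ν) = t.eval (e.assign ν)
  | _, .var s n => rfl
  | _, .app f args => by
      show e.toEquiv _ (A.interpFunc f _) = B.interpFunc f _
      rw [e.map_func]
      congr 1
      funext i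
      exact Iso.eval_assign e ν (args i)

theorem Iso.assign_update {A B : Structure Sg} (e : Iso A B) (ν : Assign A)
    (s : Sg.Sorts) (n : ℕ) (a : A.dom s) :
    e.assign (ν.update s n a) = (e.assign ν).update s n (e.toEquiv s a) := by
  funext t m
  unfold Iso.assign Assign.update
  by_cases hst : s = t
  · subst hst
    rw [dif_pos rfl, dif_pos rfl]
    by_cases hmn : m = n
    · rw [if_pos hmn, if_pos hmn]
    · rw [if_neg hmn, if_neg hmn]
  · rw [dif_neg hst, dif_neg hst]

theorem Iso.sat_iff {A B : Structure Sg} (e : Iso A B) :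
    ∀ (φ : Formula Sg) (ν : Assign A), Sat A ν φ ↔ Sat B (e.assign ν) φ
  | .eq t u, ν => by
      rw [sat_eq_iff, sat_eq_iff, ← e.eval_assign ν t, ← e.eval_assign ν u]
      exact (Equiv.apply_eq_iff_eq _).symm
  | .pred P args, ν => by
      show A.interpPred P _ ↔ B.interpPred P _
      rw [e.map_pred]
      have harg : (fun i => e.toEquiv _ ((args i).eval ν)) =
          fun i => (args i).eval (e.assign ν) := by
        funext i; exact e.eval_assign ν (args i)
      rw [harg]
  | .falsum, ν => Iff.rfl
  | .imp φ ψ, ν => by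
      rw [sat_imp_iff, sat_imp_iff, e.sat_iff φ ν, e.sat_iff ψ ν]
  | .all s n φ, ν => by
      rw [sat_all_iff, sat_all_iff]
      constructor
      · intro h b
        have := (e.sat_iff φ (ν.update s n ((e.toEquiv s).symm b))).1 (h _)
        rwa [e.assign_update, Equiv.apply_symm_apply] at this
      · intro h a
        rw [e.sat_iff φ _, e.assign_update]
        exact h _

end MS


set_option autoImplicit false
set_option maxHeartbeats 1000000

namespace MS

variable {Sg : MSSignature} {Λ : Type} {sp : Split Sg Λ}

/-- A formula lying entirely in one part. -/
def IsPartAtom (sp : Split Sg Λ) (χ : Formula Sg) : Prop := ∃ l, χ.inPart sp l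

def IsClause (sp : Split Sg Λ) (χ : Formula Sg) : Prop :=
  ∃ L, (∀ a ∈ L, IsPartAtom sp a) ∧ χ = Formula.orList L

def IsCube (sp : Split Sg Λ) (χ : Formula Sg) : Prop :=
  ∃ L, (∀ a ∈ L, IsPartAtom sp a) ∧ χ = Formula.andList L

theorem sat_andList_cons {A : Structure Sg} {ν : Assign A} {φ : Formula Sg}
    {L : List (Formula Sg)} :
    Sat A ν (Formula.andList (φ :: L)) ↔ Sat A ν φ ∧ Sat A ν (Formula.andList L) := by
  show Sat A ν (φ.and (Formula.andList L)) ↔ _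
  exact sat_and_iff

theorem sat_orList_cons {A : Structure Sg} {ν : Assign A} {φ : Formula Sg}
    {L : List (Formula Sg)} :
    Sat A ν (Formula.orList (φ :: L)) ↔ Sat A ν φ ∨ Sat A ν (Formula.orList L) := by
  show Sat A ν (φ.or (Formula.orList L)) ↔ _
  exact sat_or_iff

theorem sat_andList_nil {A : Structure Sg} {ν : Assign A} :
    Sat A ν (Formula.andList ([] : List (Formula Sg))) := by
  rw [sat_andList_iff]; simp

theorem not_sat_orList_nil {A : Structure Sg} {ν : Assign A} :
    ¬ Sat A ν (Formula.orList ([] : List (Formula Sg))) := by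
  rw [sat_orList_iff]; simp

/-- Negation of a CNF is equivalent to a DNF. -/
theorem not_cnf_dnf : ∀ {L : List (Formula Sg)}, (∀ c ∈ L, IsClause sp c) →
    ∃ M, (∀ c ∈ M, IsCube sp c) ∧
      LogEquiv (Formula.andList L).not (Formula.orList M) := by
  intro L
  induction L with
  | nil =>
    intro _
    refine ⟨[], by simp, fun B ν => ?_⟩
    rw [sat_not_iff]
    simp [sat_andList_nil, not_sat_orList_nil]
  | cons C L ih =>
    intro h
    obtain ⟨A, hA, rfl⟩ := h _ (List.mem_cons_self)
    obtain ⟨M, hM, hEq⟩ := ih fun c hc => h c (List.mem_cons_of_mem _ hc)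
    refine ⟨Formula.andList (A.map Formula.not) :: M, ?_, fun B ν => ?_⟩
    · intro c hc
      rcases List.mem_cons.1 hc with rfl | hc
      · refine ⟨A.map Formula.not, ?_, rfl⟩
        intro a ha
        rcases List.mem_map.1 ha with ⟨b, hb, rfl⟩
        obtain ⟨l, hl⟩ := hA b hb
        exact ⟨l, Formula.inPart_not hl⟩
      · exact hM c hc
    · have hE := hEq B ν
      rw [sat_not_iff] at hE
      rw [sat_not_iff, sat_andList_cons, sat_orList_cons, ← hE]
      have h1 : Sat B ν (Formula.andList (A.map Formula.not)) ↔
          ¬ Sat B ν (Formula.orList A) := by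
        rw [sat_andList_iff, sat_orList_iff]
        push_neg
        constructor
        · intro hh a ha
          exact sat_not_iff.1 (hh _ (List.mem_map_of_mem ha))
        · intro hh a ha
          rcases List.mem_map.1 ha with ⟨b, hb, rfl⟩
          exact sat_not_iff.2 (hh b hb)
      rw [h1]
      tauto

/-- Negation of a DNF is equivalent to a CNF. -/
theorem not_dnf_cnf : ∀ {M : List (Formula Sg)}, (∀ c ∈ M, IsCube sp c) →
    ∃ L, (∀ c ∈ L, IsClause sp c) ∧
      LogEquiv (Formula.orList M).not (Formula.andList L) := by
  intro M
  induction M with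
  | nil =>
    intro _
    refine ⟨[], by simp, fun B ν => ?_⟩
    rw [sat_not_iff]
    simp [sat_andList_nil, not_sat_orList_nil]
  | cons C M ih =>
    intro h
    obtain ⟨A, hA, rfl⟩ := h _ (List.mem_cons_self)
    obtain ⟨L, hL, hEq⟩ := ih fun c hc => h c (List.mem_cons_of_mem _ hc)
    refine ⟨Formula.orList (A.map Formula.not) :: L, ?_, fun B ν => ?_⟩
    · intro c hc
      rcases List.mem_cons.1 hc with rfl | hc
      · refine ⟨A.map Formula.not, ?_, rfl⟩
        intro a ha
        rcases List.mem_map.1 ha with ⟨b, hb, rfl⟩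
        obtain ⟨l, hl⟩ := hA b hb
        exact ⟨l, Formula.inPart_not hl⟩
      · exact hL c hc
    · have hE := hEq B ν
      rw [sat_not_iff] at hE
      rw [sat_not_iff, sat_orList_cons, sat_andList_cons, ← hE]
      have h1 : Sat B ν (Formula.orList (A.map Formula.not)) ↔
          ¬ Sat B ν (Formula.andList A) := by
        rw [sat_andList_iff, sat_orList_iff]
        push_neg
        constructor
        · rintro ⟨a, ha, hsa⟩
          rcases List.mem_map.1 ha with ⟨b, hb, rfl⟩
          exact ⟨b, hb, sat_not_iff.1 hsa⟩
        · rintro ⟨b, hb, hsb⟩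
          exact ⟨_, List.mem_map_of_mem hb, sat_not_iff.2 hsb⟩
      rw [h1]
      tauto

/-- Disjunction of a clause with a CNF is a CNF. -/
theorem clause_or_cnf {A : List (Formula Sg)} (hA : ∀ a ∈ A, IsPartAtom sp a) :
    ∀ {L : List (Formula Sg)}, (∀ c ∈ L, IsClause sp c) →
    ∃ M, (∀ c ∈ M, IsClause sp c) ∧
      LogEquiv ((Formula.orList A).or (Formula.andList L)) (Formula.andList M) := by
  intro L
  induction L with
  | nil =>
    intro _
    refine ⟨[], by simp, fun B ν => ?_⟩
    rw [sat_or_iff]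
    simp [sat_andList_nil]
  | cons C L ih =>
    intro h
    obtain ⟨A2, hA2, rfl⟩ := h _ (List.mem_cons_self)
    obtain ⟨M, hM, hEq⟩ := ih fun c hc => h c (List.mem_cons_of_mem _ hc)
    refine ⟨Formula.orList (A ++ A2) :: M, ?_, fun B ν => ?_⟩
    · intro c hc
      rcases List.mem_cons.1 hc with rfl | hc
      · refine ⟨A ++ A2, ?_, rfl⟩
        intro a ha
        rcases List.mem_append.1 ha with ha | ha
        · exact hA a ha
        · exact hA2 a ha
      · exact hM c hc
    · have hE := hEq B ν
      rw [sat_or_iff] at hE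
      rw [sat_or_iff, sat_andList_cons, sat_andList_cons, ← hE]
      have h1 : Sat B ν (Formula.orList (A ++ A2)) ↔
          Sat B ν (Formula.orList A) ∨ Sat B ν (Formula.orList A2) := by
        rw [sat_orList_iff, sat_orList_iff, sat_orList_iff]
        constructor
        · rintro ⟨a, ha, hsa⟩
          rcases List.mem_append.1 ha with ha | ha
          · exact Or.inl ⟨a, ha, hsa⟩
          · exact Or.inr ⟨a, ha, hsa⟩
        · rintro (⟨a, ha, hsa⟩ | ⟨a, ha, hsa⟩)
          · exact ⟨a, List.mem_append_left _ ha, hsa⟩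
          · exact ⟨a, List.mem_append_right _ ha, hsa⟩
      rw [h1]
      tauto

/-- Disjunction of two CNFs is a CNF. -/
theorem cnf_or_cnf : ∀ {L1 : List (Formula Sg)}, (∀ c ∈ L1, IsClause sp c) →
    ∀ {L2 : List (Formula Sg)}, (∀ c ∈ L2, IsClause sp c) →
    ∃ M, (∀ c ∈ M, IsClause sp c) ∧
      LogEquiv ((Formula.andList L1).or (Formula.andList L2)) (Formula.andList M) := by
  intro L1
  induction L1 with
  | nil =>
    intro _ L2 _
    refine ⟨[], by simp, fun B ν => ?_⟩
    rw [sat_or_iff]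
    simp [sat_andList_nil]
  | cons C L1 ih =>
    intro h1 L2 h2
    obtain ⟨A, hA, rfl⟩ := h1 _ (List.mem_cons_self)
    obtain ⟨M1, hM1, hEq1⟩ := clause_or_cnf hA h2
    obtain ⟨M2, hM2, hEq2⟩ := ih (fun c hc => h1 c (List.mem_cons_of_mem _ hc)) h2
    refine ⟨M1 ++ M2, ?_, fun B ν => ?_⟩
    · intro c hc
      rcases List.mem_append.1 hc with hc | hc
      · exact hM1 c hc
      · exact hM2 c hc
    · have hE1 := hEq1 B ν
      have hE2 := hEq2 B ν
      rw [sat_or_iff] at hE1 hE2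
      rw [sat_or_iff, sat_andList_cons]
      have h3 : Sat B ν (Formula.andList (M1 ++ M2)) ↔
          Sat B ν (Formula.andList M1) ∧ Sat B ν (Formula.andList M2) := by
        rw [sat_andList_iff, sat_andList_iff, sat_andList_iff]
        constructor
        · intro h
          exact ⟨fun φ hφ => h φ (List.mem_append_left _ hφ),
                 fun φ hφ => h φ (List.mem_append_right _ hφ)⟩
        · rintro ⟨ha, hb⟩ φ hφ
          rcases List.mem_append.1 hφ with hφ | hφ
          · exact ha φ hφ
          · exact hb φ hφ
      rw [h3, ← hE1, ← hE2]
      tauto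

/-- Conjunction of a clause with a DNF is a DNF. -/
theorem clause_and_dnf {A : List (Formula Sg)} (hA : ∀ a ∈ A, IsPartAtom sp a) :
    ∀ {M : List (Formula Sg)}, (∀ c ∈ M, IsCube sp c) →
    ∃ M', (∀ c ∈ M', IsCube sp c) ∧
      LogEquiv ((Formula.orList A).and (Formula.orList M)) (Formula.orList M') := by
  intro M
  induction M with
  | nil =>
    intro _
    refine ⟨[], by simp, fun B ν => ?_⟩
    rw [sat_and_iff]
    simp [not_sat_orList_nil]
  | cons D M ih =>
    intro h
    obtain ⟨BB, hBB, rfl⟩ := h _ (List.mem_cons_self)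
    obtain ⟨M', hM', hEq⟩ := ih fun c hc => h c (List.mem_cons_of_mem _ hc)
    refine ⟨A.map (fun a => Formula.andList (a :: BB)) ++ M', ?_, fun B ν => ?_⟩
    · intro c hc
      rcases List.mem_append.1 hc with hc | hc
      · rcases List.mem_map.1 hc with ⟨a, ha, rfl⟩
        refine ⟨a :: BB, ?_, rfl⟩
        intro b hb
        rcases List.mem_cons.1 hb with rfl | hb
        · exact hA b ha
        · exact hBB b hb
      · exact hM' c hc
    · have hE := hEq B ν
      rw [sat_and_iff] at hE
      rw [sat_and_iff, sat_orList_cons]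
      have h1 : Sat B ν (Formula.orList (A.map (fun a => Formula.andList (a :: BB)) ++ M')) ↔
          (Sat B ν (Formula.orList A) ∧ Sat B ν (Formula.andList BB)) ∨
            Sat B ν (Formula.orList M') := by
        rw [sat_orList_iff]
        constructor
        · rintro ⟨c, hc, hsc⟩
          rcases List.mem_append.1 hc with hc | hc
          · rcases List.mem_map.1 hc with ⟨a, ha, rfl⟩
            rw [sat_andList_cons] at hsc
            exact Or.inl ⟨sat_orList_iff.2 ⟨a, ha, hsc.1⟩, hsc.2⟩
          · exact Or.inr (sat_orList_iff.2 ⟨c, hc, hsc⟩)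
        · rintro (⟨hsA, hsBB⟩ | hsM)
          · rcases sat_orList_iff.1 hsA with ⟨a, ha, hsa⟩
            exact ⟨_, List.mem_append_left _ (List.mem_map_of_mem ha),
              sat_andList_cons.2 ⟨hsa, hsBB⟩⟩
          · rcases sat_orList_iff.1 hsM with ⟨c, hc, hsc⟩
            exact ⟨c, List.mem_append_right _ hc, hsc⟩
      rw [h1, ← hE]
      tauto

/-- A CNF is equivalent to a DNF. -/
theorem cnf_to_dnf : ∀ {L : List (Formula Sg)}, (∀ c ∈ L, IsClause sp c) →
    ∃ M, (∀ c ∈ M, IsCube sp c) ∧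
      LogEquiv (Formula.andList L) (Formula.orList M) := by
  intro L
  induction L with
  | nil =>
    intro _
    refine ⟨[Formula.andList []], ?_, fun B ν => ?_⟩
    · intro c hc
      rcases List.mem_singleton.1 hc with rfl
      exact ⟨[], by simp, rfl⟩
    · rw [sat_orList_iff]
      simp [sat_andList_nil]
  | cons C L ih =>
    intro h
    obtain ⟨A, hA, rfl⟩ := h _ (List.mem_cons_self)
    obtain ⟨M, hM, hEq⟩ := ih fun c hc => h c (List.mem_cons_of_mem _ hc)
    obtain ⟨M', hM', hEq'⟩ := clause_and_dnf hA hM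
    refine ⟨M', hM', fun B ν => ?_⟩
    have hE := hEq B ν
    have hE' := hEq' B ν
    rw [sat_and_iff] at hE'
    rw [sat_andList_cons, ← hE', ← hE]

/-- Split a list of part-atoms into those in part `l0` and those in other parts. -/
theorem clause_split (l0 : Λ) : ∀ (A : List (Formula Sg)), (∀ a ∈ A, IsPartAtom sp a) →
    ∃ A1 A2 : List (Formula Sg),
      (∀ a ∈ A1, a.inPart sp l0) ∧
      (∀ a ∈ A2, ∃ l, a.inPart sp l ∧ l ≠ l0) ∧
      (∀ (B : Structure Sg) (ν : Assign B),
        Sat B ν (Formula.orList A) ↔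
          Sat B ν (Formula.orList A1) ∨ Sat B ν (Formula.orList A2)) := by
  intro A
  induction A with
  | nil =>
    intro _
    exact ⟨[], [], by simp, by simp, fun B ν => by simp [not_sat_orList_nil]⟩
  | cons a A ih =>
    intro h
    obtain ⟨A1, A2, h1, h2, hE⟩ := ih fun b hb => h b (List.mem_cons_of_mem _ hb)
    by_cases h0 : a.inPart sp l0
    · refine ⟨a :: A1, A2, ?_, h2, fun B ν => ?_⟩
      · intro b hb
        rcases List.mem_cons.1 hb with rfl | hb
        · exact h0
        · exact h1 b hb
      · rw [sat_orList_cons, sat_orList_cons, hE B ν]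
        tauto
    · obtain ⟨l, hl⟩ := h a (List.mem_cons_self)
      refine ⟨A1, a :: A2, h1, ?_, fun B ν => ?_⟩
      · intro b hb
        rcases List.mem_cons.1 hb with rfl | hb
        · exact ⟨l, hl, fun hc => h0 (hc ▸ hl)⟩
        · exact h2 b hb
      · rw [sat_orList_cons, sat_orList_cons, hE B ν]
        tauto

/-- Universal quantification over a clause is equivalent to a clause. -/
theorem all_clause {s : Sg.Sorts} {n : ℕ} {C : Formula Sg} (hC : IsClause sp C) :
    ∃ C', IsClause sp C' ∧ LogEquiv (Formula.all s n C) C' := by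
  obtain ⟨A, hA, rfl⟩ := hC
  obtain ⟨A1, A2, h1, h2, hE⟩ := clause_split (sp := sp) (sp.sortPart s) A hA
  refine ⟨Formula.orList (Formula.all s n (Formula.orList A1) :: A2), ?_, fun B ν => ?_⟩
  · refine ⟨Formula.all s n (Formula.orList A1) :: A2, ?_, rfl⟩
    intro a ha
    rcases List.mem_cons.1 ha with rfl | ha
    · exact ⟨sp.sortPart s, Formula.inPart_all rfl (Formula.inPart_orList h1)⟩
    · obtain ⟨l, hl, _⟩ := h2 a ha
      exact ⟨l, hl⟩
  · have hinv : ∀ a : B.dom s,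
        Sat B (ν.update s n a) (Formula.orList A2) ↔ Sat B ν (Formula.orList A2) := by
      intro a
      rw [sat_orList_iff, sat_orList_iff]
      refine exists_congr fun b => and_congr_right fun hb => ?_
      obtain ⟨l, hl, hne⟩ := h2 b hb
      exact sat_update_of_part_ne hl (fun hc => hne hc.symm)
    rw [sat_orList_cons, sat_all_iff, sat_all_iff]
    constructor
    · intro h
      by_cases h2' : Sat B ν (Formula.orList A2)
      · exact Or.inr h2'
      · refine Or.inl fun a => ?_
        rcases (hE B _).1 (h a) with hh | hh
        · exact hh
        · exact absurd ((hinv a).1 hh) h2'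
    · rintro (h | h) <;> intro a <;> rw [hE B _]
      · exact Or.inl (h a)
      · exact Or.inr ((hinv a).2 h)

/-- Universal quantification over a CNF is equivalent to a CNF. -/
theorem all_cnf {s : Sg.Sorts} {n : ℕ} : ∀ {L : List (Formula Sg)},
    (∀ c ∈ L, IsClause sp c) →
    ∃ M, (∀ c ∈ M, IsClause sp c) ∧
      LogEquiv (Formula.all s n (Formula.andList L)) (Formula.andList M) := by
  intro L
  induction L with
  | nil =>
    intro _
    refine ⟨[], by simp, fun B ν => ?_⟩
    rw [sat_all_iff]
    exact iff_of_true (fun a => sat_andList_nil) sat_andList_nil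
  | cons C L ih =>
    intro h
    obtain ⟨M, hM, hEq⟩ := ih fun c hc => h c (List.mem_cons_of_mem _ hc)
    obtain ⟨C', hC', hEq'⟩ := all_clause (s := s) (n := n) (h _ (List.mem_cons_self))
    refine ⟨C' :: M, ?_, fun B ν => ?_⟩
    · intro c hc
      rcases List.mem_cons.1 hc with rfl | hc
      · exact hC'
      · exact hM c hc
    · have h1 := hEq B ν
      have h2 := hEq' B ν
      rw [sat_all_iff] at h1 h2
      rw [sat_all_iff, sat_andList_cons, ← h2, ← h1]
      constructor
      · intro hh
        exact ⟨fun a => (sat_andList_cons.1 (hh a)).1, fun a => (sat_andList_cons.1 (hh a)).2⟩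
      · rintro ⟨ha, hb⟩ a
        exact sat_andList_cons.2 ⟨ha a, hb a⟩

/-- Main normal form theorem: every formula has an equivalent CNF whose clauses
are disjunctions of single-part formulas, and likewise a DNF. -/
theorem exists_cnf_dnf (sp : Split Sg Λ) : ∀ φ : Formula Sg,
    (∃ L, (∀ c ∈ L, IsClause sp c) ∧ LogEquiv φ (Formula.andList L)) ∧
    (∃ M, (∀ c ∈ M, IsCube sp c) ∧ LogEquiv φ (Formula.orList M)) := by
  have atom_case : ∀ φ : Formula Sg, IsPartAtom sp φ →
      (∃ L, (∀ c ∈ L, IsClause sp c) ∧ LogEquiv φ (Formula.andList L)) ∧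
      (∃ M, (∀ c ∈ M, IsCube sp c) ∧ LogEquiv φ (Formula.orList M)) := by
    intro φ hφ
    constructor
    · refine ⟨[Formula.orList [φ]], ?_, fun B ν => ?_⟩
      · intro c hc
        rcases List.mem_singleton.1 hc with rfl
        exact ⟨[φ], by simpa using hφ, rfl⟩
      · rw [sat_andList_iff]
        simp only [List.mem_singleton, forall_eq]
        rw [sat_orList_iff]
        simp
    · refine ⟨[Formula.andList [φ]], ?_, fun B ν => ?_⟩
      · intro c hc
        rcases List.mem_singleton.1 hc with rfl
        exact ⟨[φ], by simpa using hφ, rfl⟩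
      · rw [sat_orList_iff]
        simp only [List.mem_singleton, exists_eq_left]
        rw [sat_andList_iff]
        simp
  intro φ
  induction φ with
  | eq t u =>
    refine atom_case _ ⟨sp.sortPart _, rfl, ?_, ?_⟩
    · exact Term.inPart_sortPart t rfl
    · exact Term.inPart_sortPart u rfl
  | pred P args =>
    exact atom_case _ ⟨sp.predPart P, rfl,
      fun i => Term.inPart_sortPart (args i) (sp.pred_dom P i)⟩
  | falsum =>
    constructor
    · refine ⟨[Formula.orList []], ?_, fun B ν => ?_⟩
      · intro c hc
        rcases List.mem_singleton.1 hc with rfl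
        exact ⟨[], by simp, rfl⟩
      · rw [sat_falsum_iff, sat_andList_iff]
        simp only [List.mem_singleton, forall_eq]
        simp [not_sat_orList_nil]
    · exact ⟨[], by simp, fun B ν => by
        rw [sat_falsum_iff]
        simp [not_sat_orList_nil]⟩
  | imp φ ψ ihφ ihψ =>
    obtain ⟨⟨Lφ, hLφ, eLφ⟩, ⟨Mφ, hMφ, eMφ⟩⟩ := ihφ
    obtain ⟨⟨Lψ, hLψ, eLψ⟩, ⟨Mψ, hMψ, eMψ⟩⟩ := ihψ
    constructor
    · -- CNF of imp: (¬φ) ∨ ψ; ¬φ from DNF of φ.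
      obtain ⟨L1, hL1, e1⟩ := not_dnf_cnf hMφ
      obtain ⟨M, hM, e2⟩ := cnf_or_cnf hL1 hLψ
      refine ⟨M, hM, fun B ν => ?_⟩
      have h1 := eMφ B ν
      have h2 := eLψ B ν
      have h3 := e1 B ν
      have h4 := e2 B ν
      rw [sat_not_iff] at h3
      rw [sat_or_iff] at h4
      rw [sat_imp_iff, ← h4, ← h3, ← h2, h1]
      tauto
    · -- DNF of imp: (¬φ) ∨ ψ; ¬φ from CNF of φ.
      obtain ⟨M1, hM1, e1⟩ := not_cnf_dnf hLφ
      refine ⟨M1 ++ Mψ, ?_, fun B ν => ?_⟩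
      · intro c hc
        rcases List.mem_append.1 hc with hc | hc
        · exact hM1 c hc
        · exact hMψ c hc
      · have h1 := eLφ B ν
        have h2 := eMψ B ν
        have h3 := e1 B ν
        rw [sat_not_iff] at h3
        have h4 : Sat B ν (Formula.orList (M1 ++ Mψ)) ↔
            Sat B ν (Formula.orList M1) ∨ Sat B ν (Formula.orList Mψ) := by
          rw [sat_orList_iff, sat_orList_iff, sat_orList_iff]
          constructor
          · rintro ⟨c, hc, hsc⟩
            rcases List.mem_append.1 hc with hc | hc
            · exact Or.inl ⟨c, hc, hsc⟩
            · exact Or.inr ⟨c, hc, hsc⟩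
          · rintro (⟨c, hc, hsc⟩ | ⟨c, hc, hsc⟩)
            · exact ⟨c, List.mem_append_left _ hc, hsc⟩
            · exact ⟨c, List.mem_append_right _ hc, hsc⟩
        rw [sat_imp_iff, h4, ← h3, ← h2, h1]
        tauto
  | all s n φ ihφ =>
    obtain ⟨⟨Lφ, hLφ, eLφ⟩, _⟩ := ihφ
    obtain ⟨M, hM, eM⟩ := all_cnf (s := s) (n := n) hLφ
    have e0 : LogEquiv (Formula.all s n φ) (Formula.andList M) :=
      (LogEquiv.all s n eLφ).trans eM
    refine ⟨⟨M, hM, e0⟩, ?_⟩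
    obtain ⟨M', hM', eM'⟩ := cnf_to_dnf hM
    exact ⟨M', hM', e0.trans eM'⟩

end MS


set_option autoImplicit false
set_option maxHeartbeats 1000000

open Cardinal

namespace MS

variable {Sg : MSSignature} {Λ : Type} {sp : Split Sg Λ}

def Term.depth : ∀ {s : Sg.Sorts}, Term Sg s → ℕ
  | _, .var _ _ => 0
  | _, .app _ args => (Finset.univ.sup fun i => (args i).depth) + 1

def Formula.depth : Formula Sg → ℕ
  | .eq _ _ => 0
  | .pred _ _ => 0
  | .falsum => 0
  | .imp φ ψ => max φ.depth ψ.depth + 1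
  | .all _ _ φ => φ.depth + 1

variable (sp) in
def TP (l : Λ) (n : ℕ) : Set (Σ s : Sg.Sorts, Term Sg s) :=
  {x | x.2.inPart sp l ∧ x.2.depth ≤ n}

variable (sp) in
/-- The single-sort subtype of part-`l` terms. -/
def TermL (l : Λ) (s : Sg.Sorts) : Type := {t : Term Sg s // t.inPart sp l}

open Classical in
/-- Coerce a term of unknown sort to sort `s` (junk value if sorts mismatch). -/
noncomputable def fit (s : Sg.Sorts) (x : Σ s' : Sg.Sorts, Term Sg s') : Term Sg s :=
  if h : x.1 = s then h ▸ x.2 else Term.var s 0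

theorem fit_rfl {s : Sg.Sorts} {t : Term Sg s} : fit s ⟨s, t⟩ = t := by
  unfold fit
  rw [dif_pos rfl]

theorem fit_inPart {l : Λ} {s : Sg.Sorts} {x : Σ s', Term Sg s'} (hs : sp.sortPart s = l)
    (hx : x.2.inPart sp l) : (fit s x).inPart sp l := by
  rcases x with ⟨s', t⟩
  unfold fit
  by_cases h : s' = s
  · subst h; rw [dif_pos rfl]; exact hx
  · rw [dif_neg h]; exact hs

theorem fit_depth {n : ℕ} {s : Sg.Sorts} {x : Σ s', Term Sg s'} (hx : x.2.depth ≤ n) :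
    (fit s x).depth ≤ n := by
  rcases x with ⟨s', t⟩
  unfold fit
  by_cases h : s' = s
  · subst h; rw [dif_pos rfl]; exact hx
  · rw [dif_neg h]; exact Nat.zero_le n

section counting

variable {l : Λ} {c : Cardinal}

theorem hc_aux (hS : #{s : Sg.Sorts // sp.sortPart s = l} ≤ c)
    (hF : #{f : Sg.Func // sp.funcPart f = l} ≤ c)
    (hN : ℵ₀ ≤ c) : ∀ n : ℕ, #(TP sp l n) ≤ c := by
  have hprod : #({s : Sg.Sorts // sp.sortPart s = l} × ℕ) ≤ c := by
    rw [Cardinal.mk_prod]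
    simp only [Cardinal.lift_id, Cardinal.mk_nat]
    calc #{s : Sg.Sorts // sp.sortPart s = l} * ℵ₀ ≤ c * c := mul_le_mul' hS hN
      _ = c := Cardinal.mul_eq_self hN
  intro n
  induction n with
  | zero =>
    have hsurj : Function.Surjective
        (fun p : {s : Sg.Sorts // sp.sortPart s = l} × ℕ =>
          (⟨⟨p.1.1, Term.var p.1.1 p.2⟩, p.1.2, Nat.le_refl _⟩ : TP sp l 0)) := by
      rintro ⟨⟨s, t⟩, ht, hd⟩
      cases t with
      | var s k => exact ⟨⟨⟨s, ht⟩, k⟩, rfl⟩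
      | app f args => simp [Term.depth] at hd
    exact le_trans (Cardinal.mk_le_of_surjective hsurj) hprod
  | succ n ih =>
    have hsurj : ∃ g : (({s : Sg.Sorts // sp.sortPart s = l} × ℕ) ⊕
        (Σ f : {f : Sg.Func // sp.funcPart f = l},
          ∀ i : Fin (Sg.funcDom f.1).length, TP sp l n)) → TP sp l (n+1),
        Function.Surjective g := by
      refine ⟨fun e => ?_, ?_⟩
      · rcases e with ⟨⟨s, hs⟩, k⟩ | ⟨⟨f, hf⟩, args⟩
        · exact ⟨⟨s, Term.var s k⟩, hs, Nat.zero_le _⟩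
        · refine ⟨⟨_, Term.app f (fun i => fit ((Sg.funcDom f).get i) ((args i).1))⟩,
            ⟨hf, fun i => ?_⟩, ?_⟩
          · refine fit_inPart ?_ ((args i).2.1)
            rw [sp.func_dom f i]; exact hf
          · show (Finset.univ.sup _) + 1 ≤ n + 1
            exact Nat.succ_le_succ (Finset.sup_le fun i _ => fit_depth ((args i).2.2))
      · rintro ⟨⟨s, t⟩, ht, hd⟩
        cases t with
        | var s k => exact ⟨Sum.inl ⟨⟨s, ht⟩, k⟩, rfl⟩
        | app f args =>
          simp only [Term.depth] at hd
          have hsup : (Finset.univ.sup fun i => (args i).depth) ≤ n := by omega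
          have hd' : ∀ i, (args i).depth ≤ n := fun i =>
            le_trans (Finset.le_sup (f := fun i => (args i).depth) (Finset.mem_univ i)) hsup
          refine ⟨Sum.inr ⟨⟨f, ht.1⟩, fun i => ⟨⟨_, args i⟩, ht.2 i, hd' i⟩⟩, ?_⟩
          have harg : (fun i => fit ((Sg.funcDom f).get i)
              (⟨(Sg.funcDom f).get i, args i⟩ : Σ s', Term Sg s')) = args := by
            funext i; exact fit_rfl
          exact Subtype.ext (congrArg
            (fun a => (⟨Sg.funcCod f, Term.app f a⟩ : Σ s', Term Sg s')) harg)
    obtain ⟨g, hg⟩ := hsurj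
    have hB : #(Σ f : {f : Sg.Func // sp.funcPart f = l},
        ∀ i : Fin (Sg.funcDom f.1).length, TP sp l n) ≤ c := by
      rw [Cardinal.mk_sigma]
      have hstep : ∀ f : {f : Sg.Func // sp.funcPart f = l},
          #(∀ i : Fin (Sg.funcDom f.1).length, TP sp l n) ≤ c := by
        intro f
        rw [Cardinal.mk_pi]
        calc Cardinal.prod (fun _ : Fin (Sg.funcDom f.1).length => #(TP sp l n))
            ≤ Cardinal.prod (fun _ : Fin (Sg.funcDom f.1).length => c) :=
              Cardinal.prod_le_prod _ _ fun _ => ih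
          _ = c ^ ((Sg.funcDom f.1).length : Cardinal) := by
              rw [Cardinal.prod_const']
              simp [Cardinal.mk_fin]
          _ ≤ c := by
              rw [Cardinal.power_natCast]
              exact Cardinal.power_nat_le hN
      calc Cardinal.sum (fun f : {f : Sg.Func // sp.funcPart f = l} =>
              #(∀ i : Fin (Sg.funcDom f.1).length, TP sp l n))
          ≤ Cardinal.sum (fun _ : {f : Sg.Func // sp.funcPart f = l} => c) :=
            Cardinal.sum_le_sum _ _ hstep
        _ = #{f : Sg.Func // sp.funcPart f = l} * c := Cardinal.sum_const' _ _
        _ ≤ c * c := mul_le_mul' hF le_rfl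
        _ = c := Cardinal.mul_eq_self hN
    refine le_trans (Cardinal.mk_le_of_surjective hg) ?_
    rw [Cardinal.mk_sum]
    simp only [Cardinal.lift_id]
    calc _ ≤ c + c := add_le_add hprod hB
      _ = c := Cardinal.add_eq_self hN

theorem card_term_part_le (hS : #{s : Sg.Sorts // sp.sortPart s = l} ≤ c)
    (hF : #{f : Sg.Func // sp.funcPart f = l} ≤ c) (hN : ℵ₀ ≤ c) (s : Sg.Sorts) :
    #(TermL sp l s) ≤ c := by
  have hsub : #{x : Σ s : Sg.Sorts, Term Sg s // x.2.inPart sp l} ≤ c := by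
    have hsub2 : {x : Σ s : Sg.Sorts, Term Sg s | x.2.inPart sp l} ⊆
        ⋃ n : ℕ, TP sp l n := by
      intro x hx
      exact Set.mem_iUnion.2 ⟨x.2.depth, hx, le_rfl⟩
    calc #{x : Σ s : Sg.Sorts, Term Sg s // x.2.inPart sp l}
        ≤ #(⋃ n : ℕ, TP sp l n) := Cardinal.mk_le_mk_of_subset hsub2
      _ ≤ ℵ₀ * ⨆ n : ℕ, #(TP sp l n) := by
          simpa using Cardinal.mk_iUnion_le (TP sp l)
      _ ≤ c * c := mul_le_mul' hN (ciSup_le' fun n => hc_aux hS hF hN n)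
      _ = c := Cardinal.mul_eq_self hN
  refine le_trans (Cardinal.mk_le_of_injective (f := fun t : TermL sp l s =>
    (⟨⟨s, t.1⟩, t.2⟩ : {x : Σ s : Sg.Sorts, Term Sg s // x.2.inPart sp l})) ?_) hsub
  intro t u h
  have h2 := congrArg Subtype.val h
  rw [Sigma.mk.inj_iff] at h2
  exact Subtype.ext (eq_of_heq h2.2)

end counting

end MS


set_option autoImplicit false
set_option maxHeartbeats 1000000

open Cardinal

namespace MS

variable {Sg : MSSignature} {Λ : Type} {sp : Split Sg Λ}

variable (sp) in
def FP (l : Λ) (n : ℕ) : Set (Formula Sg) :=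
  {φ | φ.inPart sp l ∧ φ.depth ≤ n}

section counting

variable {l : Λ} {c : Cardinal}

variable (sp l) in
def AtomCode : Type :=
  (Σ s : {s : Sg.Sorts // sp.sortPart s = l}, TermL sp l s.1 × TermL sp l s.1) ⊕
  (Σ P : {P : Sg.Pred // sp.predPart P = l},
    ∀ i : Fin (Sg.predDom P.1).length, TermL sp l ((Sg.predDom P.1).get i)) ⊕
  PUnit

/-- Decode an atom code into a formula of `FP l n` (any `n`). -/
def decodeAtom (n : ℕ) : AtomCode sp l → FP sp l n
  | .inl ⟨⟨s, hs⟩, (t, u)⟩ => ⟨Formula.eq t.1 u.1, ⟨hs, t.2, u.2⟩, Nat.zero_le _⟩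
  | .inr (.inl ⟨⟨P, hP⟩, args⟩) =>
      ⟨Formula.pred P (fun i => (args i).1), ⟨hP, fun i => (args i).2⟩, Nat.zero_le _⟩
  | .inr (.inr _) => ⟨Formula.falsum, trivial, Nat.zero_le _⟩

theorem card_atomCode_le (hS : #{s : Sg.Sorts // sp.sortPart s = l} ≤ c)
    (hF : #{f : Sg.Func // sp.funcPart f = l} ≤ c)
    (hP : #{P : Sg.Pred // sp.predPart P = l} ≤ c)
    (hN : ℵ₀ ≤ c) : #(AtomCode sp l) ≤ c := by
  have hterm : ∀ s, #(TermL sp l s) ≤ c := card_term_part_le hS hF hN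
  have h1 : #(Σ s : {s : Sg.Sorts // sp.sortPart s = l},
      TermL sp l s.1 × TermL sp l s.1) ≤ c := by
    rw [Cardinal.mk_sigma]
    calc Cardinal.sum (fun s : {s : Sg.Sorts // sp.sortPart s = l} =>
            #(TermL sp l s.1 × TermL sp l s.1))
        ≤ Cardinal.sum (fun _ : {s : Sg.Sorts // sp.sortPart s = l} => c) := by
          refine Cardinal.sum_le_sum _ _ fun s => ?_
          rw [Cardinal.mk_prod]
          simp only [Cardinal.lift_id]
          calc #(TermL sp l s.1) * #(TermL sp l s.1) ≤ c * c :=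
                mul_le_mul' (hterm _) (hterm _)
            _ = c := Cardinal.mul_eq_self hN
      _ = #{s : Sg.Sorts // sp.sortPart s = l} * c := Cardinal.sum_const' _ _
      _ ≤ c * c := mul_le_mul' hS le_rfl
      _ = c := Cardinal.mul_eq_self hN
  have h2 : #(Σ P : {P : Sg.Pred // sp.predPart P = l},
      ∀ i : Fin (Sg.predDom P.1).length, TermL sp l ((Sg.predDom P.1).get i)) ≤ c := by
    rw [Cardinal.mk_sigma]
    calc Cardinal.sum (fun P : {P : Sg.Pred // sp.predPart P = l} =>
            #(∀ i : Fin (Sg.predDom P.1).length, TermL sp l ((Sg.predDom P.1).get i)))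
        ≤ Cardinal.sum (fun _ : {P : Sg.Pred // sp.predPart P = l} => c) := by
          refine Cardinal.sum_le_sum _ _ fun P => ?_
          rw [Cardinal.mk_pi]
          calc Cardinal.prod (fun i : Fin (Sg.predDom P.1).length =>
                  #(TermL sp l ((Sg.predDom P.1).get i)))
              ≤ Cardinal.prod (fun _ : Fin (Sg.predDom P.1).length => c) :=
                Cardinal.prod_le_prod _ _ fun i => hterm _
            _ = c ^ ((Sg.predDom P.1).length : Cardinal) := by
                rw [Cardinal.prod_const']
                simp [Cardinal.mk_fin]
            _ ≤ c := by
                rw [Cardinal.power_natCast]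
                exact Cardinal.power_nat_le hN
      _ = #{P : Sg.Pred // sp.predPart P = l} * c := Cardinal.sum_const' _ _
      _ ≤ c * c := mul_le_mul' hP le_rfl
      _ = c := Cardinal.mul_eq_self hN
  show #(_ ⊕ _ ⊕ _) ≤ c
  rw [Cardinal.mk_sum]
  simp only [Cardinal.lift_id]
  rw [Cardinal.mk_sum]
  simp only [Cardinal.lift_id]
  have hone : #PUnit.{1} ≤ c := le_trans (by simp) hN
  calc _ ≤ c + (c + c) := add_le_add h1 (add_le_add h2 hone)
    _ = c + c := congrArg (fun x => c + x) (Cardinal.add_eq_self hN)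
    _ = c := Cardinal.add_eq_self hN

theorem card_FP_le (hS : #{s : Sg.Sorts // sp.sortPart s = l} ≤ c)
    (hF : #{f : Sg.Func // sp.funcPart f = l} ≤ c)
    (hP : #{P : Sg.Pred // sp.predPart P = l} ≤ c)
    (hN : ℵ₀ ≤ c) : ∀ n : ℕ, #(FP sp l n) ≤ c := by
  have hAC := card_atomCode_le hS hF hP hN
  intro n
  induction n with
  | zero =>
    have hsurj : Function.Surjective (decodeAtom (sp := sp) (l := l) 0) := by
      rintro ⟨φ, hφ, hd⟩
      cases φ with
      | eq t u => exact ⟨.inl ⟨⟨_, hφ.1⟩, ⟨t, hφ.2.1⟩, ⟨u, hφ.2.2⟩⟩, rfl⟩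
      | pred P args => exact ⟨.inr (.inl ⟨⟨P, hφ.1⟩, fun i => ⟨args i, hφ.2 i⟩⟩), rfl⟩
      | falsum => exact ⟨.inr (.inr PUnit.unit), rfl⟩
      | imp φ ψ => simp [Formula.depth] at hd
      | all s k φ => simp [Formula.depth] at hd
    exact le_trans (Cardinal.mk_le_of_surjective hsurj) hAC
  | succ n ih =>
    have hsurj : ∃ g : (AtomCode sp l ⊕ (FP sp l n × FP sp l n) ⊕
        ({s : Sg.Sorts // sp.sortPart s = l} × ℕ × FP sp l n)) → FP sp l (n+1),
        Function.Surjective g := by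
      refine ⟨fun e => ?_, ?_⟩
      · rcases e with a | ⟨φ, ψ⟩ | ⟨⟨s, hs⟩, k, φ⟩
        · exact decodeAtom (n+1) a
        · refine ⟨Formula.imp φ.1 ψ.1, ⟨φ.2.1, ψ.2.1⟩, ?_⟩
          show max φ.1.depth ψ.1.depth + 1 ≤ n + 1
          have h1 := φ.2.2
          have h2 := ψ.2.2
          exact Nat.succ_le_succ (max_le h1 h2)
        · refine ⟨Formula.all s k φ.1, ⟨hs, φ.2.1⟩, ?_⟩
          show φ.1.depth + 1 ≤ n + 1
          exact Nat.succ_le_succ φ.2.2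
      · rintro ⟨φ, hφ, hd⟩
        cases φ with
        | eq t u => exact ⟨.inl (.inl ⟨⟨_, hφ.1⟩, ⟨t, hφ.2.1⟩, ⟨u, hφ.2.2⟩⟩), rfl⟩
        | pred P args =>
            exact ⟨.inl (.inr (.inl ⟨⟨P, hφ.1⟩, fun i => ⟨args i, hφ.2 i⟩⟩)), rfl⟩
        | falsum => exact ⟨.inl (.inr (.inr PUnit.unit)), rfl⟩
        | imp φ ψ =>
            have hd1 : φ.depth ≤ n ∧ ψ.depth ≤ n := by
              have : max φ.depth ψ.depth + 1 ≤ n + 1 := hd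
              constructor
              · have := le_trans (le_max_left φ.depth ψ.depth)
                  (Nat.lt_succ_iff.1 (Nat.lt_of_succ_le this))
                exact this
              · have := le_trans (le_max_right φ.depth ψ.depth)
                  (Nat.lt_succ_iff.1 (Nat.lt_of_succ_le this))
                exact this
            exact ⟨.inr (.inl (⟨⟨φ, hφ.1, hd1.1⟩, ⟨ψ, hφ.2, hd1.2⟩⟩)), rfl⟩
        | all s k φ =>
            have hd1 : φ.depth ≤ n := by
              have : φ.depth + 1 ≤ n + 1 := hd
              omega
            exact ⟨.inr (.inr ⟨⟨s, hφ.1⟩, k, ⟨φ, hφ.2, hd1⟩⟩), rfl⟩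
    obtain ⟨g, hg⟩ := hsurj
    refine le_trans (Cardinal.mk_le_of_surjective hg) ?_
    rw [Cardinal.mk_sum]
    simp only [Cardinal.lift_id]
    rw [Cardinal.mk_sum]
    simp only [Cardinal.lift_id]
    have hpair : #(FP sp l n × FP sp l n) ≤ c := by
      rw [Cardinal.mk_prod]
      simp only [Cardinal.lift_id]
      calc #(FP sp l n) * #(FP sp l n) ≤ c * c := mul_le_mul' ih ih
        _ = c := Cardinal.mul_eq_self hN
    have htrip : #({s : Sg.Sorts // sp.sortPart s = l} × ℕ × FP sp l n) ≤ c := by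
      rw [Cardinal.mk_prod]
      simp only [Cardinal.lift_id]
      rw [Cardinal.mk_prod]
      simp only [Cardinal.lift_id, Cardinal.mk_nat]
      calc #{s : Sg.Sorts // sp.sortPart s = l} * (ℵ₀ * #(FP sp l n))
          ≤ c * (c * c) := mul_le_mul' hS (mul_le_mul' hN ih)
        _ = c * c := congrArg (fun x => c * x) (Cardinal.mul_eq_self hN)
        _ = c := Cardinal.mul_eq_self hN
    calc _ ≤ c + (c + c) := add_le_add hAC (add_le_add hpair htrip)
      _ = c + c := congrArg (fun x => c + x) (Cardinal.add_eq_self hN)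
      _ = c := Cardinal.add_eq_self hN

theorem card_formula_part_le (hS : #{s : Sg.Sorts // sp.sortPart s = l} ≤ c)
    (hF : #{f : Sg.Func // sp.funcPart f = l} ≤ c)
    (hP : #{P : Sg.Pred // sp.predPart P = l} ≤ c)
    (hN : ℵ₀ ≤ c) : #{φ : Formula Sg // φ.inPart sp l} ≤ c := by
  have hsub2 : {φ : Formula Sg | φ.inPart sp l} ⊆ ⋃ n : ℕ, FP sp l n := by
    intro φ hφ
    exact Set.mem_iUnion.2 ⟨φ.depth, hφ, le_rfl⟩
  calc #{φ : Formula Sg // φ.inPart sp l}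
      ≤ #(⋃ n : ℕ, FP sp l n) := Cardinal.mk_le_mk_of_subset hsub2
    _ ≤ ℵ₀ * ⨆ n : ℕ, #(FP sp l n) := by
        simpa using Cardinal.mk_iUnion_le (FP sp l)
    _ ≤ c * c := mul_le_mul' hN (ciSup_le' fun n => card_FP_le hS hF hP hN n)
    _ = c := Cardinal.mul_eq_self hN

end counting

end MS


set_option autoImplicit false
set_option maxHeartbeats 1000000

open Cardinal Filter

namespace MS

variable {Sg : MSSignature}

section ultra

variable (A : Structure Sg) {I : Type} (U : Ultrafilter I)

def uSetoid (s : Sg.Sorts) : Setoid (I → A.dom s) where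
  r a b := {i | a i = b i} ∈ U
  iseqv := by
    refine ⟨fun a => ?_, fun {a b} h => ?_, fun {a b c} h1 h2 => ?_⟩
    · exact Filter.univ_mem' fun i => rfl
    · have : {i | a i = b i} ⊆ {i | b i = a i} := fun i hi => hi.symm
      exact Filter.mem_of_superset h this
    · refine Filter.mem_of_superset (Filter.inter_mem h1 h2) ?_
      rintro i ⟨hi1, hi2⟩
      exact hi1.trans hi2

@[reducible]
noncomputable def UP : Structure Sg where
  dom s := Quotient (uSetoid A U s)
  dom_nonempty s := ⟨Quotient.mk _ (fun _ => (A.dom_nonempty s).some)⟩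
  interpFunc f args := Quotient.mk _ (fun i => A.interpFunc f (fun j => (args j).out i))
  interpPred P args := {i | A.interpPred P (fun j => (args j).out i)} ∈ U

theorem out_rel {s : Sg.Sorts} (a : I → A.dom s) :
    {i | (Quotient.mk (uSetoid A U s) a).out i = a i} ∈ U :=
  Quotient.exact ((Quotient.mk (uSetoid A U s) a).out_eq)

theorem mem_congr {p q : I → Prop} (h : {i | p i ↔ q i} ∈ U) :
    ({i | p i} ∈ U ↔ {i | q i} ∈ U) := by
  constructor
  · intro hp
    refine Filter.mem_of_superset (Filter.inter_mem hp h) ?_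
    rintro i ⟨h1, h2⟩
    exact h2.1 h1
  · intro hq
    refine Filter.mem_of_superset (Filter.inter_mem hq h) ?_
    rintro i ⟨h1, h2⟩
    exact h2.2 h1

theorem funcChar (f : Sg.Func)
    (a : ∀ j : Fin (Sg.funcDom f).length, I → A.dom ((Sg.funcDom f).get j)) :
    (UP A U).interpFunc f (fun j => Quotient.mk _ (a j)) =
      Quotient.mk _ (fun i => A.interpFunc f (fun j => a j i)) := by
  refine Quotient.sound ?_
  have hT : (⋂ j, {i | (Quotient.mk (uSetoid A U _) (a j)).out i = a j i}) ∈ U :=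
    Filter.iInter_mem.2 fun j => out_rel A U (a j)
  refine Filter.mem_of_superset hT ?_
  intro i hi
  simp only [Set.mem_iInter, Set.mem_setOf_eq] at hi
  show A.interpFunc f _ = A.interpFunc f _
  congr 1
  funext j
  exact hi j

theorem predChar (P : Sg.Pred)
    (a : ∀ j : Fin (Sg.predDom P).length, I → A.dom ((Sg.predDom P).get j)) :
    ((UP A U).interpPred P (fun j => Quotient.mk _ (a j)) ↔
      {i | A.interpPred P (fun j => a j i)} ∈ U) := by
  show ({i | A.interpPred P _} ∈ U ↔ _)
  refine mem_congr U ?_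
  have hT : (⋂ j, {i | (Quotient.mk (uSetoid A U _) (a j)).out i = a j i}) ∈ U :=
    Filter.iInter_mem.2 fun j => out_rel A U (a j)
  refine Filter.mem_of_superset hT ?_
  intro i hi
  simp only [Set.mem_iInter, Set.mem_setOf_eq] at hi
  show A.interpPred P _ ↔ A.interpPred P _
  have : (fun j => ((fun j => Quotient.mk (uSetoid A U _) (a j)) j).out i) =
      fun j => a j i := by
    funext j
    exact hi j
  rw [this]

theorem eval_mk (ν : ∀ s : Sg.Sorts, ℕ → I → A.dom s) :
    ∀ {s : Sg.Sorts} (t : Term Sg s),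
      Term.eval (A := UP A U) (fun s n => Quotient.mk _ (ν s n)) t =
        Quotient.mk _ (fun i => Term.eval (fun s n => ν s n i) t)
  | _, .var s n => rfl
  | _, .app f args => by
      show (UP A U).interpFunc f (fun j => Term.eval _ (args j)) = _
      have harg : (fun j => Term.eval (A := UP A U) (fun s n => Quotient.mk _ (ν s n)) (args j)) =
          fun j => Quotient.mk _ (fun i => Term.eval (fun s n => ν s n i) (args j)) := by
        funext j
        exact eval_mk ν (args j)
      rw [harg, funcChar]
      rfl

/-- The pointwise update of a family of assignments. -/
noncomputable def updF (ν : ∀ s : Sg.Sorts, ℕ → I → A.dom s) (s : Sg.Sorts) (n : ℕ)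
    (a : I → A.dom s) : ∀ t : Sg.Sorts, ℕ → I → A.dom t :=
  fun t m i => Assign.update (A := A) (fun t' m' => ν t' m' i) s n (a i) t m

theorem update_mk (ν : ∀ s : Sg.Sorts, ℕ → I → A.dom s) (s : Sg.Sorts) (n : ℕ)
    (a : I → A.dom s) :
    Assign.update (A := UP A U) (fun s' n' => Quotient.mk _ (ν s' n')) s n
        (Quotient.mk _ a) =
      fun t m => Quotient.mk _ (updF A ν s n a t m) := by
  funext t m
  by_cases hst : s = t
  · subst hst
    by_cases hmn : m = n
    · subst hmn
      erw [Assign.update_same]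
      refine congrArg _ ?_
      funext i
      exact (Assign.update_same (fun t' m' => ν t' m' i) s m (a i)).symm
    · calc Assign.update (A := UP A U) (fun s' n' => Quotient.mk _ (ν s' n')) s n
            (Quotient.mk _ a) s m = Quotient.mk _ (ν s m) :=
          Assign.update_ne _ _ (fun hc => hmn hc.2)
        _ = _ := congrArg _ (funext fun i => by
            show ν s m i = Assign.update (A := A) (fun t' m' => ν t' m' i) s n (a i) s m
            exact (Assign.update_ne (fun t' m' => ν t' m' i) (a i) (fun hc => hmn hc.2)).symm)
  · calc Assign.update (A := UP A U) (fun s' n' => Quotient.mk _ (ν s' n')) s n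
          (Quotient.mk _ a) t m = Quotient.mk _ (ν t m) :=
        Assign.update_ne _ _ (fun hc => hst hc.1.symm)
      _ = _ := congrArg _ (funext fun i => by
          show ν t m i = Assign.update (A := A) (fun t' m' => ν t' m' i) s n (a i) t m
          exact (Assign.update_ne (fun t' m' => ν t' m' i) (a i) (fun hc => hst hc.1.symm)).symm)

/-- Łoś's theorem for the ultrapower. -/
theorem los : ∀ (φ : Formula Sg) (ν : ∀ s : Sg.Sorts, ℕ → I → A.dom s),
    Sat (UP A U) (fun s n => Quotient.mk _ (ν s n)) φ ↔
      {i | Sat A (fun s n => ν s n i) φ} ∈ U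
  | .eq t u, ν => by
      erw [sat_eq_iff, eval_mk, eval_mk]
      constructor
      · intro h
        exact Quotient.exact h
      · intro h
        exact Quotient.sound h
  | .pred P args, ν => by
      rw [show (Sat (UP A U) (fun s n => Quotient.mk _ (ν s n)) (.pred P args)) =
        ((UP A U).interpPred P fun j =>
          Term.eval (fun s n => Quotient.mk _ (ν s n)) (args j)) from rfl]
      have harg : (fun j => Term.eval (A := UP A U)
          (fun s n => Quotient.mk _ (ν s n)) (args j)) =
          fun j => Quotient.mk _ (fun i => Term.eval (fun s n => ν s n i) (args j)) := by
        funext j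
        exact eval_mk A U ν (args j)
      rw [harg, predChar]
      rfl
  | .falsum, ν => by
      erw [sat_falsum_iff]
      constructor
      · exact False.elim
      · intro h
        obtain ⟨i, hi⟩ := Filter.nonempty_of_mem h
        exact hi
  | .imp φ ψ, ν => by
      erw [sat_imp_iff, los φ ν, los ψ ν]
      constructor
      · intro h
        by_cases hφ : {i | Sat A (fun s n => ν s n i) φ} ∈ U
        · refine Filter.mem_of_superset (h hφ) ?_
          intro i hi
          exact fun _ => hi
        · rw [← Ultrafilter.compl_mem_iff_notMem] at hφ
          refine Filter.mem_of_superset hφ ?_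
          intro i hi
          exact fun hc => absurd hc hi
      · intro h hφ
        refine Filter.mem_of_superset (Filter.inter_mem h hφ) ?_
        rintro i ⟨h1, h2⟩
        exact h1 h2
  | .all s n φ, ν => by
      erw [sat_all_iff]
      constructor
      · intro h
        by_contra hc
        rw [← Ultrafilter.compl_mem_iff_notMem] at hc
        classical
        set a : I → A.dom s := fun i =>
          if hex : ∃ b : A.dom s,
              ¬ Sat A (Assign.update (fun t' m' => ν t' m' i) s n b) φ then
            hex.choose
          else (A.dom_nonempty s).some with ha
        have hsat := h (Quotient.mk _ a)
        rw [update_mk] at hsat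
        rw [los φ (updF A ν s n a)] at hsat
        have hmem := Filter.inter_mem hsat hc
        obtain ⟨i, hi1, hi2⟩ := Filter.nonempty_of_mem hmem
        simp only [Set.mem_compl_iff, Set.mem_setOf_eq] at hi2
        have hex : ∃ b : A.dom s,
            ¬ Sat A (Assign.update (fun t' m' => ν t' m' i) s n b) φ := by
          by_contra hno
          push_neg at hno
          exact hi2 fun b => hno b
        have hchoose : ¬ Sat A (Assign.update (fun t' m' => ν t' m' i) s n (a i)) φ := by
          rw [ha]
          simp only [dif_pos hex]
          exact hex.choose_spec
        exact hchoose hi1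
      · intro h x
        obtain ⟨a, rfl⟩ := Quotient.exists_rep x
        rw [update_mk, los φ (updF A ν s n a)]
        refine Filter.mem_of_superset h ?_
        intro i hi
        exact hi (a i)

/-- The diagonal embedding. -/
noncomputable def diag (s : Sg.Sorts) (a : A.dom s) : (UP A U).dom s :=
  Quotient.mk _ (fun _ => a)

theorem diag_elementary (φ : Formula Sg) (ν : Assign A) :
    Sat A ν φ ↔ Sat (UP A U) (fun s n => diag A U s (ν s n)) φ := by
  rw [show (fun s n => diag A U s (ν s n)) =
    (fun s n => Quotient.mk _ ((fun s n (_ : I) => ν s n) s n)) from rfl]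
  rw [los]
  constructor
  · intro h
    exact Filter.univ_mem' fun i => h
  · intro h
    obtain ⟨i, hi⟩ := Filter.nonempty_of_mem h
    exact hi

theorem diag_func (f : Sg.Func)
    (args : ∀ j : Fin (Sg.funcDom f).length, A.dom ((Sg.funcDom f).get j)) :
    diag A U _ (A.interpFunc f args) = (UP A U).interpFunc f (fun j => diag A U _ (args j)) := by
  rw [show (fun j => diag A U ((Sg.funcDom f).get j) (args j)) =
    (fun j => Quotient.mk _ (fun _ : I => args j)) from rfl, funcChar]
  rfl

theorem diag_pred (P : Sg.Pred)
    (args : ∀ j : Fin (Sg.predDom P).length, A.dom ((Sg.predDom P).get j)) :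
    (A.interpPred P args ↔ (UP A U).interpPred P (fun j => diag A U _ (args j))) := by
  rw [show (fun j => diag A U ((Sg.predDom P).get j) (args j)) =
    (fun j => Quotient.mk _ (fun _ : I => args j)) from rfl, predChar]
  constructor
  · intro h
    exact Filter.univ_mem' fun i => h
  · intro h
    obtain ⟨i, hi⟩ := Filter.nonempty_of_mem h
    exact hi

theorem diag_inj (s : Sg.Sorts) : Function.Injective (diag A U s) := by
  intro a b h
  have hrel := Quotient.exact h
  obtain ⟨i, hi⟩ := Filter.nonempty_of_mem hrel
  exact hi

theorem diag_surj_of_finite (s : Sg.Sorts) (hs : Finite (A.dom s)) :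
    Function.Surjective (diag A U s) := by
  intro x
  by_contra hc
  push_neg at hc
  have hout : Quotient.mk (uSetoid A U s) (Quotient.out x) = x := Quotient.out_eq x
  have hnot : ∀ b : A.dom s, {i | Quotient.out x i = b} ∉ U := by
    intro b hmem
    refine hc b ?_
    have hxb : Quotient.mk (uSetoid A U s) (Quotient.out x) =
        Quotient.mk (uSetoid A U s) (fun _ => b) := by
      refine Quotient.sound ?_
      exact Filter.mem_of_superset hmem fun i hi => hi
    rw [hout] at hxb
    exact hxb.symm
  have hint : (⋂ b : A.dom s, {i | Quotient.out x i ≠ b}) ∈ U := by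
    refine Filter.iInter_mem.2 fun b => ?_
    have := hnot b
    rwa [← Ultrafilter.compl_mem_iff_notMem] at this
  obtain ⟨i, hi⟩ := Filter.nonempty_of_mem hint
  simp only [Set.mem_iInter, Set.mem_setOf_eq] at hi
  exact hi (Quotient.out x i) rfl

end ultra

end MS


set_option autoImplicit false
set_option maxHeartbeats 1600000

open Cardinal

namespace MS

variable {Sg : MSSignature} {Λ : Type}

theorem mem_varList_ex {s : Sg.Sorts} {n : ℕ} {φ : Formula Sg} {p : Sg.Sorts × ℕ} :
    p ∈ (Formula.ex s n φ).varList ↔ p = (s, n) ∨ p ∈ φ.varList := by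
  simp [Formula.ex, Formula.not, Formula.varList]

section hull

variable (sp : Split Sg Λ) (B : Structure Sg)

noncomputable def defAsg : Assign B := fun s _ => (B.dom_nonempty s).some

open Classical in
noncomputable def wit (φ : Formula Sg) (s : Sg.Sorts) (n : ℕ) (ν : Assign B) : B.dom s :=
  if h : ∃ a : B.dom s, Sat B (ν.update s n a) φ then h.choose else (B.dom_nonempty s).some

theorem wit_spec {φ : Formula Sg} {s : Sg.Sorts} {n : ℕ} {ν : Assign B}
    (h : ∃ a : B.dom s, Sat B (ν.update s n a) φ) :
    Sat B (ν.update s n (wit B φ s n ν)) φ := by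
  unfold wit
  rw [dif_pos h]
  exact h.choose_spec

def castDom {p : Sg.Sorts × ℕ} {t : Sg.Sorts} {m : ℕ} (h : p = (t, m)) (x : B.dom p.1) :
    B.dom t := cast (congrArg (fun q : Sg.Sorts × ℕ => B.dom q.1) h) x

theorem castDom_eq (ν : Assign B) {p : Sg.Sorts × ℕ} {t : Sg.Sorts} {m : ℕ}
    (h : p = (t, m)) : castDom B h (ν p.1 p.2) = ν t m := by
  cases h
  rfl

open Classical in
noncomputable def asg (V : List (Sg.Sorts × ℕ))
    (g : ∀ i : Fin V.length, B.dom (V.get i).1) : Assign B := fun t m =>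
  if h : ∃ i : Fin V.length, V.get i = (t, m) then castDom B h.choose_spec (g h.choose)
  else defAsg B t m

theorem asg_eq (ν : Assign B) (V : List (Sg.Sorts × ℕ)) {t : Sg.Sorts} {m : ℕ}
    (hmem : (t, m) ∈ V) :
    asg B V (fun i => ν (V.get i).1 (V.get i).2) t m = ν t m := by
  unfold asg
  have hex : ∃ i : Fin V.length, V.get i = (t, m) := by
    obtain ⟨i, hi⟩ := List.mem_iff_get.1 hmem
    exact ⟨i, hi⟩
  rw [dif_pos hex]
  exact castDom_eq B ν hex.choose_spec

variable (G : ∀ s : Sg.Sorts, Set (B.dom s))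

def funcClose (X : ∀ s : Sg.Sorts, Set (B.dom s)) (s : Sg.Sorts) : Set (B.dom s) :=
  {x | ∃ (f : Sg.Func) (hf : Sg.funcCod f = s)
    (args : ∀ i : Fin (Sg.funcDom f).length, B.dom ((Sg.funcDom f).get i)),
    (∀ i, args i ∈ X _) ∧ x = hf ▸ B.interpFunc f args}

def witClose (X : ∀ s : Sg.Sorts, Set (B.dom s)) (s : Sg.Sorts) : Set (B.dom s) :=
  {x | ∃ (φ : Formula Sg), φ.inPart sp (sp.sortPart s) ∧ ∃ (n : ℕ)
    (g : ∀ i : Fin ((Formula.ex s n φ).varList).length,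
      B.dom (((Formula.ex s n φ).varList).get i).1),
    (∀ i, g i ∈ X _) ∧ x = wit B φ s n (asg B ((Formula.ex s n φ).varList) g)}

noncomputable def chain : ℕ → ∀ s : Sg.Sorts, Set (B.dom s)
  | 0 => G
  | n+1 => fun s => chain n s ∪ (funcClose B (chain n) s ∪ witClose sp B (chain n) s)

theorem chain_le_succ (n : ℕ) (s : Sg.Sorts) :
    chain sp B G n s ⊆ chain sp B G (n+1) s := Set.subset_union_left

theorem chain_mono {n m : ℕ} (h : n ≤ m) (s : Sg.Sorts) :
    chain sp B G n s ⊆ chain sp B G m s := by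
  induction h with
  | refl => exact fun x hx => hx
  | step _ ih => exact fun x hx => chain_le_succ sp B G _ s (ih hx)

def Dset (s : Sg.Sorts) : Set (B.dom s) := ⋃ n, chain sp B G n s

theorem subset_Dset (n : ℕ) (s : Sg.Sorts) : chain sp B G n s ⊆ Dset sp B G s :=
  Set.subset_iUnion (fun n => chain sp B G n s) n

theorem Dset_closed_func (f : Sg.Func)
    (args : ∀ i : Fin (Sg.funcDom f).length, B.dom ((Sg.funcDom f).get i))
    (h : ∀ i, args i ∈ Dset sp B G _) :
    B.interpFunc f args ∈ Dset sp B G (Sg.funcCod f) := by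
  have hx : ∀ i, ∃ k, args i ∈ chain sp B G k _ := fun i => Set.mem_iUnion.1 (h i)
  choose lev hlev using hx
  have hN : ∀ i, args i ∈ chain sp B G (Finset.univ.sup lev) _ := fun i =>
    chain_mono sp B G (Finset.le_sup (Finset.mem_univ i)) _ (hlev i)
  refine subset_Dset sp B G (Finset.univ.sup lev + 1) _ ?_
  exact Set.mem_union_right _ (Set.mem_union_left _ ⟨f, rfl, args, hN, rfl⟩)

theorem Dset_TV {s : Sg.Sorts} {n : ℕ} {φ : Formula Sg}
    (hφ : φ.inPart sp (sp.sortPart s)) (ν : Assign B)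
    (hν : ∀ p ∈ (Formula.ex s n φ).varList, ν p.1 p.2 ∈ Dset sp B G p.1)
    (hsat : Sat B ν (Formula.ex s n φ)) :
    ∃ w ∈ Dset sp B G s, Sat B (ν.update s n w) φ := by
  have hx : ∀ i : Fin ((Formula.ex s n φ).varList).length,
      ∃ k, ν (((Formula.ex s n φ).varList).get i).1 (((Formula.ex s n φ).varList).get i).2 ∈
        chain sp B G k (((Formula.ex s n φ).varList).get i).1 := by
    intro i
    exact Set.mem_iUnion.1 (hν _ (List.get_mem _ i))
  choose lev hlev using hx
  have hgmem : ∀ i, ν (((Formula.ex s n φ).varList).get i).1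
      (((Formula.ex s n φ).varList).get i).2 ∈
      chain sp B G (Finset.univ.sup lev) (((Formula.ex s n φ).varList).get i).1 := fun i =>
    chain_mono sp B G (Finset.le_sup (Finset.mem_univ i)) _ (hlev i)
  have hagree : ∀ p ∈ (Formula.ex s n φ).varList,
      asg B ((Formula.ex s n φ).varList)
        (fun i => ν (((Formula.ex s n φ).varList).get i).1
          (((Formula.ex s n φ).varList).get i).2) p.1 p.2 = ν p.1 p.2 := by
    rintro ⟨t, m⟩ hp
    exact asg_eq B ν _ hp
  have hsatμ : Sat B (asg B ((Formula.ex s n φ).varList)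
      (fun i => ν (((Formula.ex s n φ).varList).get i).1
        (((Formula.ex s n φ).varList).get i).2)) (Formula.ex s n φ) :=
    (sat_congr _ hagree).2 hsat
  have hex := sat_ex_iff.1 hsatμ
  refine ⟨wit B φ s n (asg B ((Formula.ex s n φ).varList)
      (fun i => ν (((Formula.ex s n φ).varList).get i).1
        (((Formula.ex s n φ).varList).get i).2)), ?_, ?_⟩
  · refine subset_Dset sp B G (Finset.univ.sup lev + 1) s ?_
    refine Set.mem_union_right _ (Set.mem_union_right _ ?_)
    exact ⟨φ, hφ, n, _, hgmem, rfl⟩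
  · have hw := wit_spec B hex
    refine (sat_congr φ (fun p hp => ?_)).1 hw
    refine update_agree _ fun _ => ?_
    exact hagree p (mem_varList_ex.2 (Or.inr hp))

variable {κ : Λ → Cardinal}

theorem chain_card (hκN : ∀ l, ℵ₀ ≤ κ l)
    (hκF : ∀ l, #{f : Sg.Func // sp.funcPart f = l} ≤ κ l)
    (hκφ : ∀ l, #{φ : Formula Sg // φ.inPart sp l} ≤ κ l)
    (hG : ∀ s, #(G s) ≤ κ (sp.sortPart s)) :
    ∀ n (s : Sg.Sorts), #(chain sp B G n s) ≤ κ (sp.sortPart s) := by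
  intro n
  induction n with
  | zero => exact hG
  | succ n ih =>
    intro s
    have hN := hκN (sp.sortPart s)
    have hfc : #(funcClose B (chain sp B G n) s) ≤ κ (sp.sortPart s) := by
      have hpart : ∀ (f : {f : Sg.Func // Sg.funcCod f = s})
          (i : Fin (Sg.funcDom f.1).length),
          sp.sortPart ((Sg.funcDom f.1).get i) = sp.sortPart s := by
        intro f i
        rw [sp.func_dom f.1 i, ← sp.func_cod f.1, f.2]
      have hsurj : ∃ g : (Σ f : {f : Sg.Func // Sg.funcCod f = s},
          ∀ i : Fin (Sg.funcDom f.1).length, chain sp B G n ((Sg.funcDom f.1).get i)) →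
          funcClose B (chain sp B G n) s, Function.Surjective g := by
        refine ⟨fun e => ⟨e.1.2 ▸ B.interpFunc e.1.1 (fun i => (e.2 i).1),
          e.1.1, e.1.2, fun i => (e.2 i).1, fun i => (e.2 i).2, rfl⟩, ?_⟩
        rintro ⟨x, f, hf, args, hmem, rfl⟩
        exact ⟨⟨⟨f, hf⟩, fun i => ⟨args i, hmem i⟩⟩, rfl⟩
      obtain ⟨g, hg⟩ := hsurj
      refine le_trans (Cardinal.mk_le_of_surjective hg) ?_
      rw [Cardinal.mk_sigma]
      calc Cardinal.sum (fun f : {f : Sg.Func // Sg.funcCod f = s} =>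
              #(∀ i : Fin (Sg.funcDom f.1).length, chain sp B G n ((Sg.funcDom f.1).get i)))
          ≤ Cardinal.sum (fun _ : {f : Sg.Func // Sg.funcCod f = s} => κ (sp.sortPart s)) := by
            refine Cardinal.sum_le_sum _ _ fun f => ?_
            rw [Cardinal.mk_pi]
            calc Cardinal.prod (fun i : Fin (Sg.funcDom f.1).length =>
                    #(chain sp B G n ((Sg.funcDom f.1).get i)))
                ≤ Cardinal.prod (fun _ : Fin (Sg.funcDom f.1).length => κ (sp.sortPart s)) := by
                  refine Cardinal.prod_le_prod _ _ fun i => ?_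
                  have hih := ih ((Sg.funcDom f.1).get i)
                  rwa [hpart f i] at hih
              _ = κ (sp.sortPart s) ^ (((Sg.funcDom f.1).length : ℕ) : Cardinal) := by
                  rw [Cardinal.prod_const']
                  simp [Cardinal.mk_fin]
              _ ≤ κ (sp.sortPart s) := by
                  rw [Cardinal.power_natCast]
                  exact Cardinal.power_nat_le hN
        _ = #{f : Sg.Func // Sg.funcCod f = s} * κ (sp.sortPart s) := Cardinal.sum_const' _ _
        _ ≤ κ (sp.sortPart s) * κ (sp.sortPart s) := by
            refine mul_le_mul' (le_trans ?_ (hκF (sp.sortPart s))) le_rfl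
            refine Cardinal.mk_subtype_mono fun f hf => ?_
            rw [← sp.func_cod f, hf]
        _ = κ (sp.sortPart s) := Cardinal.mul_eq_self hN
    have hwc : #(witClose sp B (chain sp B G n) s) ≤ κ (sp.sortPart s) := by
      have hsurj : ∃ g : (Σ φ : {φ : Formula Sg // φ.inPart sp (sp.sortPart s)}, Σ n' : ℕ,
          ∀ i : Fin ((Formula.ex s n' φ.1).varList).length,
            chain sp B G n (((Formula.ex s n' φ.1).varList).get i).1) →
          witClose sp B (chain sp B G n) s, Function.Surjective g := by
        refine ⟨fun e => ⟨wit B e.1.1 s e.2.1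
          (asg B ((Formula.ex s e.2.1 e.1.1).varList) (fun i => (e.2.2 i).1)),
          e.1.1, e.1.2, e.2.1, fun i => (e.2.2 i).1, fun i => (e.2.2 i).2, rfl⟩, ?_⟩
        rintro ⟨x, φ, hφ, n', g, hmem, rfl⟩
        exact ⟨⟨⟨φ, hφ⟩, n', fun i => ⟨g i, hmem i⟩⟩, rfl⟩
      obtain ⟨g, hg⟩ := hsurj
      refine le_trans (Cardinal.mk_le_of_surjective hg) ?_
      rw [Cardinal.mk_sigma]
      calc Cardinal.sum (fun φ : {φ : Formula Sg // φ.inPart sp (sp.sortPart s)} =>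
              #(Σ n' : ℕ, ∀ i : Fin ((Formula.ex s n' φ.1).varList).length,
                chain sp B G n (((Formula.ex s n' φ.1).varList).get i).1))
          ≤ Cardinal.sum (fun _ : {φ : Formula Sg // φ.inPart sp (sp.sortPart s)} =>
              κ (sp.sortPart s)) := by
            refine Cardinal.sum_le_sum _ _ fun φ => ?_
            rw [Cardinal.mk_sigma]
            calc Cardinal.sum (fun n' : ℕ =>
                    #(∀ i : Fin ((Formula.ex s n' φ.1).varList).length,
                      chain sp B G n (((Formula.ex s n' φ.1).varList).get i).1))
                ≤ Cardinal.sum (fun _ : ℕ => κ (sp.sortPart s)) := by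
                  refine Cardinal.sum_le_sum _ _ fun n' => ?_
                  rw [Cardinal.mk_pi]
                  have hpart : ∀ i : Fin ((Formula.ex s n' φ.1).varList).length,
                      sp.sortPart ((((Formula.ex s n' φ.1).varList).get i).1) =
                        sp.sortPart s := by
                    intro i
                    refine Formula.varList_part (sp := sp) (Formula.ex s n' φ.1)
                      (Formula.inPart_ex rfl φ.2) _ (List.get_mem _ i)
                  calc Cardinal.prod (fun i : Fin ((Formula.ex s n' φ.1).varList).length =>
                          #(chain sp B G n ((((Formula.ex s n' φ.1).varList).get i).1)))
                      ≤ Cardinal.prod (fun _ : Fin ((Formula.ex s n' φ.1).varList).length =>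
                          κ (sp.sortPart s)) := by
                        refine Cardinal.prod_le_prod _ _ fun i => ?_
                        have hih := ih ((((Formula.ex s n' φ.1).varList).get i).1)
                        rwa [hpart i] at hih
                    _ = κ (sp.sortPart s) ^
                        ((((Formula.ex s n' φ.1).varList).length : ℕ) : Cardinal) := by
                        rw [Cardinal.prod_const']
                        simp [Cardinal.mk_fin]
                    _ ≤ κ (sp.sortPart s) := by
                        rw [Cardinal.power_natCast]
                        exact Cardinal.power_nat_le hN
              _ = #ℕ * κ (sp.sortPart s) := Cardinal.sum_const' _ _
              _ ≤ κ (sp.sortPart s) * κ (sp.sortPart s) := by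
                  refine mul_le_mul' ?_ le_rfl
                  simpa using hN
              _ = κ (sp.sortPart s) := Cardinal.mul_eq_self hN
        _ = #{φ : Formula Sg // φ.inPart sp (sp.sortPart s)} * κ (sp.sortPart s) :=
            Cardinal.sum_const' _ _
        _ ≤ κ (sp.sortPart s) * κ (sp.sortPart s) :=
            mul_le_mul' (hκφ (sp.sortPart s)) le_rfl
        _ = κ (sp.sortPart s) := Cardinal.mul_eq_self hN
    calc #(chain sp B G (n+1) s)
        ≤ #(chain sp B G n s) +
            #((funcClose B (chain sp B G n) s ∪ witClose sp B (chain sp B G n) s :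
              Set (B.dom s))) := Cardinal.mk_union_le _ _
      _ ≤ κ (sp.sortPart s) + (κ (sp.sortPart s) + κ (sp.sortPart s)) :=
          add_le_add (ih s) (le_trans (Cardinal.mk_union_le _ _) (add_le_add hfc hwc))
      _ = κ (sp.sortPart s) + κ (sp.sortPart s) :=
          congrArg (fun x => κ (sp.sortPart s) + x) (Cardinal.add_eq_self hN)
      _ = κ (sp.sortPart s) := Cardinal.add_eq_self hN

theorem Dset_card (hκN : ∀ l, ℵ₀ ≤ κ l)
    (hκF : ∀ l, #{f : Sg.Func // sp.funcPart f = l} ≤ κ l)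
    (hκφ : ∀ l, #{φ : Formula Sg // φ.inPart sp l} ≤ κ l)
    (hG : ∀ s, #(G s) ≤ κ (sp.sortPart s)) (s : Sg.Sorts) :
    #(Dset sp B G s) ≤ κ (sp.sortPart s) := by
  calc #(Dset sp B G s) ≤ ℵ₀ * ⨆ n : ℕ, #(chain sp B G n s) := by
        simpa only [Cardinal.mk_nat, Dset] using Cardinal.mk_iUnion_le (fun n => chain sp B G n s)
    _ ≤ κ (sp.sortPart s) * κ (sp.sortPart s) :=
        mul_le_mul' (hκN _) (ciSup_le' fun n => chain_card sp B G hκN hκF hκφ hG n s)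
    _ = κ (sp.sortPart s) := Cardinal.mul_eq_self (hκN _)

end hull

section elem

variable {sp : Split Sg Λ} {B : Structure Sg}

theorem partElem_of_TV (D : Substructure B)
    (hTV : ∀ (s : Sg.Sorts) (n : ℕ) (φ : Formula Sg), φ.inPart sp (sp.sortPart s) →
      ∀ ν : Assign B, (∀ p ∈ (Formula.ex s n φ).varList, ν p.1 p.2 ∈ D.carrier p.1) →
        Sat B ν (Formula.ex s n φ) → ∃ w ∈ D.carrier s, Sat B (ν.update s n w) φ) :
    ∀ (φ : Formula Sg) (l : Λ), φ.inPart sp l →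
      ∀ ν : Assign D.toStructure, Sat D.toStructure ν φ ↔ Sat B (D.amb ν) φ := by
  intro φ
  induction φ with
  | eq t u =>
    intro l hφ ν
    rw [sat_eq_iff, sat_eq_iff, ← Substructure.eval_amb, ← Substructure.eval_amb]
    exact Subtype.ext_iff
  | pred P args =>
    intro l hφ ν
    show B.interpPred P _ ↔ B.interpPred P _
    have harg : (fun i => ((args i).eval ν).1) = fun i => (args i).eval (D.amb ν) := by
      funext i
      exact Substructure.eval_amb D ν (args i)
    rw [harg]
  | falsum => intro l hφ ν; exact Iff.rfl
  | imp φ ψ ihφ ihψ =>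
    intro l hφ ν
    rw [sat_imp_iff, sat_imp_iff, ihφ l hφ.1 ν, ihψ l hφ.2 ν]
  | all s n φ ihφ =>
    intro l hφ ν
    rw [sat_all_iff, sat_all_iff]
    constructor
    · intro h
      by_contra hc
      push_neg at hc
      obtain ⟨b, hb⟩ := hc
      have hsat : Sat B (D.amb ν) (Formula.ex s n φ.not) :=
        sat_ex_iff.2 ⟨b, sat_not_iff.2 hb⟩
      have hnotin : (Formula.not φ).inPart sp (sp.sortPart s) := by
        rw [hφ.1]
        exact Formula.inPart_not hφ.2
      obtain ⟨w, hw, hsatw⟩ := hTV s n φ.not hnotin (D.amb ν)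
        (fun p _ => (ν p.1 p.2).2) hsat
      have hIH := ihφ l hφ.2 (ν.update s n ⟨w, hw⟩)
      erw [Substructure.amb_update] at hIH
      exact (sat_not_iff.1 hsatw) (hIH.1 (h ⟨w, hw⟩))
    · intro h d
      have hIH := ihφ l hφ.2 (ν.update s n d)
      rw [Substructure.amb_update] at hIH
      exact hIH.2 (h d.1)

theorem isElementary_of_partElem (sp : Split Sg Λ) (D : Substructure B)
    (hPE : ∀ (φ : Formula Sg) (l : Λ), φ.inPart sp l →
      ∀ ν : Assign D.toStructure, Sat D.toStructure ν φ ↔ Sat B (D.amb ν) φ) :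
    D.IsElementary := by
  intro φ ν
  obtain ⟨L, hL, hEq⟩ := (exists_cnf_dnf sp φ).1
  rw [hEq D.toStructure ν, hEq B (D.amb ν), sat_andList_iff, sat_andList_iff]
  refine forall₂_congr fun c hc => ?_
  obtain ⟨Ac, hAc, rfl⟩ := hL c hc
  rw [sat_orList_iff, sat_orList_iff]
  refine exists_congr fun a => ?_
  refine and_congr_right fun ha => ?_
  obtain ⟨l, hl⟩ := hAc a ha
  exact hPE a l hl ν

end elem

end MS


set_option autoImplicit false
set_option maxHeartbeats 1600000

open MS Cardinal

/-- Upward Löwenheim–Skolem for split signatures: a different target cardinal `κ_λ`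
may be chosen for each part `λ` of the splitting. -/
theorem split_upward_LS {Sg : MSSignature} {Λ : Type} (sp : Split Sg Λ)
    (A : Structure Sg) (κ : Λ → Cardinal)
    (hsig : ∀ l : Λ, max (sp.partCard l) ℵ₀ ≤ κ l)
    (hdom : ∀ s : Sg.Sorts, Infinite (A.dom s) → #(A.dom s) ≤ κ (sp.sortPart s)) :
    ∃ (B : Structure Sg) (C : Substructure B), C.IsElementary ∧
      Nonempty (Iso A C.toStructure) ∧
      (∀ s : Sg.Sorts, Infinite (A.dom s) → #(B.dom s) = κ (sp.sortPart s)) ∧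
      (∀ s : Sg.Sorts, Finite (A.dom s) →
        C.carrier s = Set.univ ∧ #(B.dom s) = #(A.dom s)) := by
  classical
  -- derived bounds on κ
  have hκN : ∀ l, ℵ₀ ≤ κ l := fun l => le_trans (le_max_right _ _) (hsig l)
  have hκS : ∀ l, #{s : Sg.Sorts // sp.sortPart s = l} ≤ κ l := by
    intro l
    refine le_trans (le_trans ?_ (le_max_left _ ℵ₀)) (hsig l)
    exact le_trans (self_le_add_right _ _) (self_le_add_right _ _)
  have hκF : ∀ l, #{f : Sg.Func // sp.funcPart f = l} ≤ κ l := by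
    intro l
    refine le_trans (le_trans ?_ (le_max_left _ ℵ₀)) (hsig l)
    exact le_trans (le_add_self) (self_le_add_right _ _)
  have hκP : ∀ l, #{P : Sg.Pred // sp.predPart P = l} ≤ κ l := by
    intro l
    refine le_trans (le_trans ?_ (le_max_left _ ℵ₀)) (hsig l)
    exact le_add_self
  have hκφ : ∀ l, #{φ : Formula Sg // φ.inPart sp l} ≤ κ l := by
    intro l
    refine le_trans (card_formula_part_le (c := max (sp.partCard l) ℵ₀)
      ?_ ?_ ?_ (le_max_right _ _)) (hsig l)
    · exact le_trans (le_trans (self_le_add_right _ _) (self_le_add_right _ _))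
        (le_max_left _ _)
    · exact le_trans (le_trans (le_add_self) (self_le_add_right _ _)) (le_max_left _ _)
    · exact le_trans (le_add_self) (le_max_left _ _)
  -- index set and regular ultrafilter
  set μc : Cardinal := max (⨆ l, κ l) ℵ₀ with hμc
  set μT : Type := μc.out with hμT
  letI : DecidableEq μT := Classical.decEq μT
  have hκμ : ∀ l, κ l ≤ #μT := by
    intro l
    have h1 : κ l ≤ ⨆ l, κ l := le_ciSup (Cardinal.bddAbove_range κ) l
    have h2 : (⨆ l, κ l) ≤ μc := le_max_left _ _
    rw [hμT, Cardinal.mk_out]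
    exact le_trans h1 h2
  obtain ⟨U, hU⟩ := Ultrafilter.exists_le (Filter.atTop : Filter (Finset μT))
  have hE : ∀ α : μT, {i : Finset μT | α ∈ i} ∈ U := by
    intro α
    refine hU ?_
    have heq : {i : Finset μT | α ∈ i} = Set.Ici ({α} : Finset μT) := by
      ext i
      simp [Set.mem_Ici, Finset.le_iff_subset, Finset.singleton_subset_iff]
    rw [heq]
    exact Filter.Ici_mem_atTop _
  -- injections of μT into infinite sorts of the ultrapower
  have hFinj : ∀ s : Sg.Sorts, Infinite (A.dom s) →
      ∃ F : μT → (UP A U).dom s, Function.Injective F := by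
    intro s hs
    haveI := hs
    set e : ℕ ↪ A.dom s := Infinite.natEmbedding (A.dom s) with he
    refine ⟨fun α => Quotient.mk (uSetoid A U s) (fun i =>
      if h : α ∈ i then e (((Fintype.equivFin {x : μT // x ∈ i}) ⟨α, h⟩ : Fin _) : ℕ)
      else e 0), ?_⟩
    intro α β hαβ
    by_contra hne
    have hrel := Quotient.exact hαβ
    obtain ⟨i, hi1, hiα, hiβ⟩ := Filter.nonempty_of_mem
      (Filter.inter_mem hrel (Filter.inter_mem (hE α) (hE β)))
    simp only [Set.mem_setOf_eq] at hi1 hiα hiβ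
    rw [dif_pos hiα, dif_pos hiβ] at hi1
    have h2 := e.injective hi1
    have h3 : ((Fintype.equivFin {x : μT // x ∈ i}) ⟨α, hiα⟩) =
        ((Fintype.equivFin {x : μT // x ∈ i}) ⟨β, hiβ⟩) := Fin.ext h2
    have h4 := (Fintype.equivFin {x : μT // x ∈ i}).injective h3
    exact hne (congrArg Subtype.val h4)
  -- choose the extra generator sets
  have hchoice : ∀ s : Sg.Sorts, ∃ X : Set ((UP A U).dom s),
      #X ≤ κ (sp.sortPart s) ∧ (Infinite (A.dom s) → #X = κ (sp.sortPart s)) := by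
    intro s
    by_cases hs : Infinite (A.dom s)
    · obtain ⟨F, hF⟩ := hFinj s hs
      obtain ⟨S, hS⟩ := Cardinal.le_mk_iff_exists_set.1 (hκμ (sp.sortPart s))
      refine ⟨F '' S, ?_, fun _ => ?_⟩
      · rw [Cardinal.mk_image_eq hF, hS]
      · rw [Cardinal.mk_image_eq hF, hS]
    · refine ⟨∅, ?_, fun h => absurd h hs⟩
      rw [Cardinal.mk_emptyCollection]
      exact Cardinal.zero_le _
  choose extra hextra1 hextra2 using hchoice
  set G : ∀ s : Sg.Sorts, Set ((UP A U).dom s) :=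
    fun s => Set.range (diag A U s) ∪ extra s with hGdef
  have hGcard : ∀ s, #(G s) ≤ κ (sp.sortPart s) := by
    intro s
    refine le_trans (Cardinal.mk_union_le _ _) ?_
    have h1 : #(Set.range (diag A U s)) ≤ κ (sp.sortPart s) := by
      rw [Cardinal.mk_range_eq _ (diag_inj A U s)]
      rcases finite_or_infinite (A.dom s) with hfin | hinf
      · exact le_trans (le_of_lt (Cardinal.lt_aleph0_of_finite _)) (hκN _)
      · exact hdom s hinf
    calc #(Set.range (diag A U s)) + #(extra s)
        ≤ κ (sp.sortPart s) + κ (sp.sortPart s) := add_le_add h1 (hextra1 s)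
      _ = κ (sp.sortPart s) := Cardinal.add_eq_self (hκN _)
  have hjD : ∀ (s : Sg.Sorts) (a : A.dom s), diag A U s a ∈ Dset sp (UP A U) G s := by
    intro s a
    refine subset_Dset sp (UP A U) G 0 s ?_
    exact Set.mem_union_left _ ⟨a, rfl⟩
  have hextraD : ∀ s : Sg.Sorts, extra s ⊆ Dset sp (UP A U) G s := by
    intro s
    refine Set.Subset.trans ?_ (subset_Dset sp (UP A U) G 0 s)
    exact Set.subset_union_right
  -- the hull substructure of the ultrapower
  set D : Substructure (UP A U) :=
    { carrier := Dset sp (UP A U) G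
      carrier_nonempty := fun s => ⟨diag A U s (A.dom_nonempty s).some,
        hjD s (A.dom_nonempty s).some⟩
      closed := Dset_closed_func sp (UP A U) G } with hDdef
  have hDelem : D.IsElementary := by
    refine isElementary_of_partElem sp D (partElem_of_TV D ?_)
    intro s n φ hφ ν hν hsat
    exact Dset_TV sp (UP A U) G hφ ν hν hsat
  -- the copy of A inside the hull
  set C : Substructure D.toStructure :=
    { carrier := fun s => {x : D.toStructure.dom s | x.1 ∈ Set.range (diag A U s)}
      carrier_nonempty := fun s => ⟨⟨diag A U s (A.dom_nonempty s).some,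
        hjD s (A.dom_nonempty s).some⟩, ⟨(A.dom_nonempty s).some, rfl⟩⟩
      closed := by
        intro f args hargs
        choose b hb using hargs
        show (D.toStructure.interpFunc f args).1 ∈ Set.range (diag A U (Sg.funcCod f))
        refine ⟨A.interpFunc f b, ?_⟩
        rw [diag_func]
        show (UP A U).interpFunc f (fun i => diag A U _ (b i)) =
          (UP A U).interpFunc f (fun i => (args i).1)
        congr 1
        funext i
        exact hb i } with hCdef
  -- the isomorphism A ≃ C
  have hbij : ∀ s : Sg.Sorts, Function.Bijective (fun a : A.dom s =>
      (⟨⟨diag A U s a, hjD s a⟩, ⟨a, rfl⟩⟩ : C.carrier s)) := by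
    intro s
    constructor
    · intro a b hab
      have h1 := congrArg (fun x : C.carrier s => x.1.1) hab
      exact diag_inj A U s h1
    · rintro ⟨⟨x, hxD⟩, a, ha⟩
      exact ⟨a, Subtype.ext (Subtype.ext ha)⟩
  set e : Iso A C.toStructure :=
    { toEquiv := fun s => Equiv.ofBijective _ (hbij s)
      map_func := by
        intro f args
        refine Subtype.ext (Subtype.ext ?_)
        exact diag_func A U f args
      map_pred := by
        intro P' args
        exact diag_pred A U P' args } with hedef
  refine ⟨D.toStructure, C, ?_, ⟨e⟩, ?_, ?_⟩
  · -- C is elementary in D.toStructure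
    intro φ ν
    have hρspec : ∀ (s : Sg.Sorts) (n : ℕ),
        diag A U s (Exists.choose (ν s n).2) = (ν s n).1.1 := fun s n =>
      Exists.choose_spec (ν s n).2
    have h1 : Sat A (fun s n => Exists.choose (ν s n).2) φ ↔ Sat C.toStructure ν φ := by
      have h := e.sat_iff φ (fun s n => Exists.choose (ν s n).2)
      have hass : e.assign (fun s n => Exists.choose (ν s n).2) = ν := by
        funext s n
        refine Subtype.ext (Subtype.ext ?_)
        exact hρspec s n
      rwa [hass] at h
    have h2 : Sat A (fun s n => Exists.choose (ν s n).2) φ ↔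
        Sat (UP A U) (fun s n => diag A U s (Exists.choose (ν s n).2)) φ :=
      diag_elementary A U φ _
    have h3 : (fun s n => diag A U s (Exists.choose (ν s n).2)) = D.amb (C.amb ν) := by
      funext s n
      exact hρspec s n
    have h4 := hDelem φ (C.amb ν)
    rw [← h1, h2, h3]
    exact h4.symm
  · -- infinite sorts have size κ
    intro s hs
    show #(Dset sp (UP A U) G s) = κ (sp.sortPart s)
    refine le_antisymm ?_ ?_
    · exact Dset_card sp (UP A U) G hκN hκF hκφ hGcard s
    · rw [← hextra2 s hs]
      exact Cardinal.mk_le_mk_of_subset (hextraD s)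
  · -- finite sorts are preserved
    intro s hs
    constructor
    · refine Set.eq_univ_iff_forall.2 fun x => ?_
      exact diag_surj_of_finite A U s hs x.1
    · have hbijs : Function.Bijective (diag A U s) :=
        ⟨diag_inj A U s, diag_surj_of_finite A U s hs⟩
      have hPA : #((UP A U).dom s) = #(A.dom s) :=
        (Cardinal.mk_congr (Equiv.ofBijective _ hbijs)).symm
      show #(Dset sp (UP A U) G s) = #(A.dom s)
      refine le_antisymm ?_ ?_
      · exact le_trans (Cardinal.mk_set_le _) (le_of_eq hPA)
      · calc #(A.dom s) = #(Set.range (diag A U s)) :=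
            (Cardinal.mk_range_eq _ (diag_inj A U s)).symm
          _ ≤ #(Dset sp (UP A U) G s) := Cardinal.mk_le_mk_of_subset
              (Set.Subset.trans Set.subset_union_left (subset_Dset sp (UP A U) G 0 s))
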